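/- arXiv:2605.02840 — 4 statements merged into one kernel-verified Lean document; each statement's English description precedes it below -/
import Mathlib

section
/- In the one-time pad setting, if security holds (I(M:M') = 0) and correctness holds (I(M:M'|R) = S(M)) and the message is independent of the shared randomness (S(MR) = S(M) + S(R)), then S(M) = I(M:R|M'), and consequently S(R) ≥ S(M). -/
open scoped BigOperators

noncomputable section

namespace OTP

/-- Shannon entropy (natural logarithm) of a distribution on a finite type. -/
def shEntropy {α : Type*} [Fintype α] (p : α → ℝ) : ℝ :=
  ∑ i, Real.negMulLog (p i)

variable {M M' R : Type*} [Fintype M] [Fintype M'] [Fintype R]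

/-- Marginal on the message `M`. -/
def margM (p : M × M' × R → ℝ) : M → ℝ := fun m => ∑ m', ∑ r, p (m, m', r)

/-- Marginal on the ciphertext `M'`. -/
def margM' (p : M × M' × R → ℝ) : M' → ℝ := fun m' => ∑ m, ∑ r, p (m, m', r)

/-- Marginal on the shared key `R`. -/
def margR (p : M × M' × R → ℝ) : R → ℝ := fun r => ∑ m, ∑ m', p (m, m', r)

/-- Joint marginal on `M, M'`. -/
def margMM' (p : M × M' × R → ℝ) : M × M' → ℝ := fun x => ∑ r, p (x.1, x.2, r)

/-- Joint marginal on `M, R`. -/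
def margMR (p : M × M' × R → ℝ) : M × R → ℝ := fun x => ∑ m', p (x.1, m', x.2)

/-- Joint marginal on `M', R`. -/
def margM'R (p : M × M' × R → ℝ) : M' × R → ℝ := fun x => ∑ m, p (m, x.1, x.2)


lemma negMulLog_sum_le {ι : Type*} [Fintype ι] (f : ι → ℝ) (hf : ∀ i, 0 ≤ f i) :
    Real.negMulLog (∑ i, f i) ≤ ∑ i, Real.negMulLog (f i) := by
  have hs : ∀ i : ι, f i ≤ ∑ j, f j := fun i =>
    Finset.single_le_sum (fun j _ => hf j) (Finset.mem_univ i)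
  have : Real.negMulLog (∑ i, f i) = ∑ i, (-(f i) * Real.log (∑ j, f j)) := by
    rw [Real.negMulLog, ← Finset.sum_neg_distrib, ← Finset.sum_mul]
  rw [this]
  apply Finset.sum_le_sum
  intro i _
  rcases eq_or_lt_of_le (hf i) with h | h
  · simp [← h, Real.negMulLog]
  · rw [Real.negMulLog]
    have : Real.log (f i) ≤ Real.log (∑ j, f j) := Real.log_le_log h (hs i)
    nlinarith
lemma gibbs {ι : Type*} [Fintype ι] (f g : ι → ℝ) (hf : ∀ i, 0 ≤ f i)
    (hg : ∀ i, 0 ≤ g i) (h0 : ∀ i, g i = 0 → f i = 0) :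
    ∑ i, Real.negMulLog (f i)
      ≤ (∑ i, (-(f i) * Real.log (g i))) + ((∑ i, g i) - ∑ i, f i) := by
  have key : ∀ i : ι, Real.negMulLog (f i) ≤ -(f i) * Real.log (g i) + (g i - f i) := by
    intro i
    rcases eq_or_lt_of_le (hf i) with h | h
    · simp [← h, Real.negMulLog]; linarith [hg i]
    · have hgpos : 0 < g i := by
        rcases eq_or_lt_of_le (hg i) with h' | h'
        · exact absurd (h0 i h'.symm) (by linarith)
        · exact h'
      have hlog : Real.log (g i / f i) ≤ g i / f i - 1 :=
        Real.log_le_sub_one_of_pos (by positivity)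
      rw [Real.log_div (ne_of_gt hgpos) (ne_of_gt h)] at hlog
      rw [Real.negMulLog]
      have := mul_le_mul_of_nonneg_left hlog (le_of_lt h)
      have h2 : f i * (g i / f i - 1) = g i - f i := by field_simp
      rw [h2] at this
      nlinarith
  calc ∑ i, Real.negMulLog (f i) ≤ ∑ i, (-(f i) * Real.log (g i) + (g i - f i)) :=
        Finset.sum_le_sum (fun i _ => key i)
    _ = _ := by rw [Finset.sum_add_distrib, Finset.sum_sub_distrib]

/-- In the one-time pad setting, if security holds (`I(M:M') = 0`),
correctness holds (`I(M:M'|R) = S(M)`), and the message is independent of the shared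
randomness (`S(MR) = S(M) + S(R)`), then `S(M) = I(M:R|M')`, and consequently
`S(R) ≥ S(M)`.  Here `I(A:B) = S(A) + S(B) - S(AB)` and
`I(A:B|C) = S(AC) + S(BC) - S(C) - S(ABC)`. -/
theorem one_time_pad_key_lower_bound
    (p : M × M' × R → ℝ) (hp : ∀ v, 0 ≤ p v) (hsum : ∑ v, p v = 1)
    (hsec : shEntropy (margM p) + shEntropy (margM' p) - shEntropy (margMM' p) = 0)
    (hcorr : shEntropy (margMR p) + shEntropy (margM'R p) - shEntropy (margR p)
        - shEntropy p = shEntropy (margM p))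
    (hind : shEntropy (margMR p) = shEntropy (margM p) + shEntropy (margR p)) :
    shEntropy (margM p)
        = shEntropy (margMM' p) + shEntropy (margM'R p) - shEntropy (margM' p)
          - shEntropy p
      ∧ shEntropy (margM p) ≤ shEntropy (margR p) := by

  classical
  -- abbreviations
  set a : M' → ℝ := margM' p with ha
  set b : R → ℝ := margR p with hb
  set f : M' × R → ℝ := margM'R p with hfdef
  -- nonnegativity of marginals
  have hfnn : ∀ x, 0 ≤ f x := fun x => Finset.sum_nonneg fun m _ => hp _
  have hann : ∀ m', 0 ≤ a m' :=
    fun m' => Finset.sum_nonneg fun m _ => Finset.sum_nonneg fun r _ => hp _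
  have hbnn : ∀ r, 0 ≤ b r :=
    fun r => Finset.sum_nonneg fun m _ => Finset.sum_nonneg fun m' _ => hp _
  -- relations between marginals
  have hM'sum : ∀ m', ∑ r, f (m', r) = a m' := by
    intro m'
    simp only [hfdef, margM'R, ha, margM']
    exact Finset.sum_comm
  have hRsum : ∀ r, ∑ m', f (m', r) = b r := by
    intro r
    simp only [hfdef, margM'R, hb, margR]
    exact Finset.sum_comm
  have hfa : ∀ x : M' × R, f x ≤ a x.1 := by
    intro x
    rw [← hM'sum x.1]
    exact Finset.single_le_sum (fun r _ => hfnn (x.1, r)) (Finset.mem_univ x.2)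
  have hfb : ∀ x : M' × R, f x ≤ b x.2 := by
    intro x
    rw [← hRsum x.2]
    exact Finset.single_le_sum (fun m' _ => hfnn (m', x.2)) (Finset.mem_univ x.1)
  -- total sums
  have hasum : ∑ m', a m' = 1 := by
    rw [← hsum]
    simp only [ha, margM', Fintype.sum_prod_type]
    exact Finset.sum_comm
  have hsum' : ∑ x : M' × R, f x = 1 := by
    rw [← hasum, Fintype.sum_prod_type]
    exact Finset.sum_congr rfl fun m' _ => hM'sum m'
  have hbsum : ∑ r, b r = 1 := by
    rw [← hsum']
    rw [Fintype.sum_prod_type_right]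
    exact Finset.sum_congr rfl fun r _ => (hRsum r).symm
  -- subadditivity : S(M'R) ≤ S(M') + S(R)
  have hsub : shEntropy f ≤ shEntropy a + shEntropy b := by
    have h0 : ∀ x : M' × R, a x.1 * b x.2 = 0 → f x = 0 := by
      intro x hx
      rcases mul_eq_zero.mp hx with h | h
      · exact le_antisymm (h ▸ hfa x) (hfnn x)
      · exact le_antisymm (h ▸ hfb x) (hfnn x)
    have hgibbs := gibbs f (fun x => a x.1 * b x.2) hfnn
      (fun x => mul_nonneg (hann x.1) (hbnn x.2)) h0
    have hgsum : ∑ x : M' × R, a x.1 * b x.2 = 1 := by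
      rw [Fintype.sum_prod_type]
      simp only [← Finset.mul_sum, ← Finset.sum_mul, hbsum, hasum]
      simp [hasum]
    have hcross : (∑ x : M' × R, (-(f x) * Real.log (a x.1 * b x.2)))
        = shEntropy a + shEntropy b := by
      have hsplit : ∀ x : M' × R, -(f x) * Real.log (a x.1 * b x.2)
          = -(f x) * Real.log (a x.1) + -(f x) * Real.log (b x.2) := by
        intro x
        rcases eq_or_lt_of_le (hfnn x) with h | h
        · simp [← h]
        · have ha0 : a x.1 ≠ 0 := ne_of_gt (lt_of_lt_of_le h (hfa x))
          have hb0 : b x.2 ≠ 0 := ne_of_gt (lt_of_lt_of_le h (hfb x))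
          rw [Real.log_mul ha0 hb0]; ring
      rw [Finset.sum_congr rfl fun x _ => hsplit x, Finset.sum_add_distrib]
      congr 1
      · rw [Fintype.sum_prod_type]
        simp only [shEntropy, Real.negMulLog]
        exact Finset.sum_congr rfl fun m' _ => by
          rw [← Finset.sum_mul, Finset.sum_neg_distrib, hM'sum]
      · rw [Fintype.sum_prod_type_right]
        simp only [shEntropy, Real.negMulLog]
        exact Finset.sum_congr rfl fun r _ => by
          rw [← Finset.sum_mul, Finset.sum_neg_distrib, hRsum]
    rw [hcross, hgsum, hsum'] at hgibbs
    simpa [shEntropy] using hgibbs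
  -- monotonicity : S(MM') ≤ S(p)
  have hmono : shEntropy (margMM' p) ≤ shEntropy p := by
    have : shEntropy p = ∑ x : M × M', ∑ r, Real.negMulLog (p (x.1, x.2, r)) := by
      simp [shEntropy, Fintype.sum_prod_type]
    rw [this]
    apply Finset.sum_le_sum
    intro x _
    exact negMulLog_sum_le _ (fun r => hp _)
  -- algebra
  have hM'R : shEntropy (margM'R p) = shEntropy p := by linarith
  constructor
  · linarith
  · have := hsub
    rw [hM'R] at this
    linarith


end OTP
end
end

section
/- In port-based teleportation with N ports of local dimension d, the entanglement fidelity of the teleportation channel with the identity equals (N/d²) times the average success probability of distinguishing the N states σ^k with POVM {Λ^k}: F_e(T, I) = (N/d²)·(1/N) Σ_{k=1}^N tr(Λ^k σ^k), where σ^k = Ψ⁺_{A_k B'} ⊗ I_{Ā_k}/d^{N-1}. -/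
open scoped BigOperators ComplexOrder Matrix

noncomputable section

namespace QI

/-- The Hilbert space of the `N` ports, each of local dimension `d`. -/
abbrev Ports (N d : ℕ) := Fin N → Fin d

/-- The states `σ^k = Ψ⁺_{A_k B'} ⊗ I_{Ā_k} / d^{N-1}` on `A × B'`, where
`A = A_1 ⋯ A_N` are the `N` ports. -/
def portState (N d : ℕ) (k : Fin N) :
    Matrix (Ports N d × Fin d) (Ports N d × Fin d) ℂ :=
  Matrix.of fun x y =>
    (if x.1 k = x.2 ∧ y.1 k = y.2 then ((d : ℂ))⁻¹ else 0) *
      (((d : ℂ) ^ (N - 1))⁻¹ * (if ∀ i, i ≠ k → x.1 i = y.1 i then 1 else 0))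

/-- The port-teleportation channel
`T(σ_in) = ∑ₖ tr_{AA'} (Λ^k_{AA'} [σ^k_{AB'} ⊗ σ_in])`, written out entrywise on the
output system `B'`. -/
def teleChannel (N d : ℕ)
    (Λ : Fin N → Matrix (Ports N d × Fin d) (Ports N d × Fin d) ℂ)
    (σin : Matrix (Fin d) (Fin d) ℂ) : Matrix (Fin d) (Fin d) ℂ :=
  Matrix.of fun b b' =>
    ∑ k, ∑ a : Ports N d, ∑ α : Fin d, ∑ a' : Ports N d, ∑ α' : Fin d,
      Λ k (a, α) (a', α') * portState N d k (a', b) (a, b') * σin α' α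

/-- The projector onto the maximally entangled state on two `d`-dimensional systems. -/
def maxEntD (d : ℕ) : Matrix (Fin d × Fin d) (Fin d × Fin d) ℂ :=
  Matrix.of fun p q => if p.1 = p.2 ∧ q.1 = q.2 then ((d : ℂ))⁻¹ else 0

/-- The entanglement fidelity of the teleportation channel with the identity channel,
`F_e(T, I) = tr (Ψ⁺_{CB'} (I_C ⊗ T)(Ψ⁺_{CA'}))`. -/
def entFidelity (N d : ℕ)
    (Λ : Fin N → Matrix (Ports N d × Fin d) (Ports N d × Fin d) ℂ) : ℝ :=
  (Matrix.trace (maxEntD d *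
    Matrix.of fun p q : Fin d × Fin d =>
      teleChannel N d Λ
        (Matrix.of fun α α' => maxEntD d (p.1, α) (q.1, α')) p.2 q.2)).re


/-- Entrywise formula for the teleportation channel applied to a slice of the
maximally entangled state. -/
lemma tele_entry (N d : ℕ)
    (Λ : Fin N → Matrix (Ports N d × Fin d) (Ports N d × Fin d) ℂ)
    (q1 p1 b b' : Fin d) :
    teleChannel N d Λ (Matrix.of fun α α' => maxEntD d (q1, α) (p1, α')) b b'
      = (d : ℂ)⁻¹ * ∑ k, ∑ a : Ports N d, ∑ a' : Ports N d,
          Λ k (a, p1) (a', q1) * portState N d k (a', b) (a, b') := by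
  simp only [teleChannel, maxEntD, Matrix.of_apply, ite_and, mul_ite, ite_mul,
    mul_zero, zero_mul, Finset.sum_ite_eq, Finset.sum_ite_eq', Finset.mem_univ, if_true,
    Finset.mul_sum]
  refine Finset.sum_congr rfl fun k _ => Finset.sum_congr rfl fun a _ => ?_
  rw [Finset.sum_comm]
  simp [mul_comm]

/-- The complex-valued form of the entanglement-fidelity identity. -/
lemma key (N d : ℕ)
    (Λ : Fin N → Matrix (Ports N d × Fin d) (Ports N d × Fin d) ℂ) :
    Matrix.trace (maxEntD d *
      Matrix.of fun p q : Fin d × Fin d =>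
        teleChannel N d Λ
          (Matrix.of fun α α' => maxEntD d (p.1, α) (q.1, α')) p.2 q.2)
    = (((d : ℂ)) ^ 2)⁻¹ * ∑ k, Matrix.trace (Λ k * portState N d k) := by
  have htr : ∀ k, Matrix.trace (Λ k * portState N d k)
      = ∑ a : Ports N d, ∑ c1 : Fin d, ∑ a' : Ports N d, ∑ c2 : Fin d,
          Λ k (a, c1) (a', c2) * portState N d k (a', c2) (a, c1) := by
    intro k
    simp [Matrix.trace, Matrix.mul_apply, Fintype.sum_prod_type]
  simp only [Matrix.trace, Matrix.diag, Matrix.mul_apply, Matrix.of_apply, tele_entry]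
  simp only [maxEntD, Matrix.of_apply, Fintype.sum_prod_type, ite_and, mul_ite, ite_mul,
    mul_zero, zero_mul, Finset.sum_ite_irrel, Finset.sum_const_zero,
    Finset.sum_ite_eq, Finset.sum_ite_eq', Finset.mem_univ, if_true,
    htr, Finset.mul_sum]
  conv_lhs => enter [2, c]; rw [Finset.sum_comm]
  rw [Finset.sum_comm]
  conv_lhs => enter [2, k, 2, c]; rw [Finset.sum_comm]
  conv_lhs => enter [2, k]; rw [Finset.sum_comm]
  conv_lhs => enter [2, k, 2, a, 2, c]; rw [Finset.sum_comm]
  refine Finset.sum_congr rfl fun k _ => Finset.sum_congr rfl fun a _ =>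
    Finset.sum_congr rfl fun c _ => Finset.sum_congr rfl fun a' _ =>
    Finset.sum_congr rfl fun i _ => ?_
  rw [sq, mul_inv]
  ring

/-- In port-based teleportation with `N` ports of local dimension `d`,
the entanglement fidelity of the teleportation channel with the identity equals
`(N/d²)` times the average success probability of distinguishing the `N` states `σ^k`
with the POVM `{Λ^k}`:
`F_e(T, I) = (N/d²) · (1/N) ∑ₖ tr (Λ^k σ^k)`. -/
theorem port_teleportation_entanglement_fidelity (N d : ℕ)
    (Λ : Fin N → Matrix (Ports N d × Fin d) (Ports N d × Fin d) ℂ)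
    (hpos : ∀ k, (Λ k).PosSemidef) (hsum : ∑ k, Λ k = 1) :
    entFidelity N d Λ
      = ((N : ℝ) / (d : ℝ) ^ 2) *
        ((N : ℝ)⁻¹ * ∑ k, (Matrix.trace (Λ k * portState N d k)).re) := by
  rw [entFidelity, key]
  have h1 : (((d : ℂ)) ^ 2)⁻¹ = (((((d : ℝ)) ^ 2)⁻¹ : ℝ) : ℂ) := by push_cast; ring
  rw [h1, Complex.re_ofReal_mul, Complex.re_sum]
  rcases Nat.eq_zero_or_pos N with h | h
  · subst h; simp
  · rw [div_mul_eq_mul_div, ← mul_assoc, mul_inv_cancel₀ (by positivity), one_mul,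
      div_eq_inv_mul]

end QI
end
end

section
/- Garden-hose parity composition: the garden-hose complexity of the XOR of Boolean functions satisfies GH(⊕_i f_i) ≤ 4 Σ_i GH(f_i). -/
open scoped BigOperators

namespace GardenHose

/-- The deterministic walk of the water through a garden-hose configuration, with fuel.
`a` is Alice's pairing of the ends on her side (`none` is the tap, `some p` her end of
pipe `p`; ends fixed by `a` are unconnected), and `b` is Bob's pairing of his pipe ends.
The walk is called at an Alice-side end `e` about to traverse Alice's hose there.
The result `Sum.inl e'` means the water spills on Alice's side at end `e'`
(`Sum.inl none` means it spills at the tap), and `Sum.inr p` means it spills on Bob's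
side at his end of pipe `p`. -/
def walk {m : ℕ} (a : Option (Fin m) → Option (Fin m)) (b : Fin m → Fin m) :
    ℕ → Option (Fin m) → Option (Fin m) ⊕ Fin m
  | 0, e => Sum.inl e
  | n + 1, e =>
    if a e = e then Sum.inl e
    else
      match a e with
      | none => Sum.inl none
      | some p => if b p = p then Sum.inr p else walk a b n (some (b p))

/-- A garden-hose protocol with `m` pipes: for each of her inputs `x`, Alice connects
the ends on her side (her ends of the pipes together with the tap) in pairs with hoses,
and for each of his inputs `y`, Bob connects his ends of the pipes in pairs; the
pairings are recorded as involutions, whose fixed points are the unconnected ends. -/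
structure Protocol (X Y : Type*) (m : ℕ) where
  alice : X → Option (Fin m) → Option (Fin m)
  bob : Y → Fin m → Fin m
  alice_inv : ∀ x, Function.Involutive (alice x)
  bob_inv : ∀ y, Function.Involutive (bob y)

/-- The end at which the water spills, on inputs `x, y`: water enters at the tap and
follows the pipes and hoses.  (The fuel `2 * m + 2` is enough for the walk, which never
traverses a pipe twice, to terminate.) -/
def Protocol.spill {X Y : Type*} {m : ℕ} (P : Protocol X Y m) (x : X) (y : Y) :
    Option (Fin m) ⊕ Fin m :=
  walk (P.alice x) (P.bob y) (2 * m + 2) none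

/-- `P` computes `f` in the garden-hose model: on inputs `(x, y)` the water spills on
Bob's side iff `f x y = true` (equivalently, on Alice's side iff `f x y = false`). -/
def Protocol.Computes {X Y : Type*} {m : ℕ} (P : Protocol X Y m)
    (f : X → Y → Bool) : Prop :=
  ∀ x y, (P.spill x y).isRight = f x y

/-- The garden-hose complexity of `f`: the minimal number of pipes of a garden-hose
protocol computing `f`. -/
noncomputable def GH {X Y : Type*} [Fintype X] [Fintype Y] (f : X → Y → Bool) : ℕ :=
  sInf {m | ∃ P : Protocol X Y m, P.Computes f}

/-! ### Abstract steps -/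

section StepAux

variable {ι : Type*} {a : Option ι → Option ι} {b : ι → ι}

/-- A single step of the water walk, in abstract form. -/
def Step (a : Option ι → Option ι) (b : ι → ι) (e e' : Option ι) : Prop :=
  ∃ p, a e = some p ∧ a e ≠ e ∧ b p ≠ p ∧ e' = some (b p)

theorem rtg_head_none (h : a none = none) {E}
    (hr : Relation.ReflTransGen (Step a b) none E) : E = none := by
  rcases hr.cases_head with rfl | ⟨w, ⟨p, hp, _, _, _⟩, _⟩
  · rfl
  · rw [h] at hp; cases hp

/-- Extract an indexed path from a `ReflTransGen` chain. -/
theorem rtg_idx {α : Type*} {r : α → α → Prop} {s e : α}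
    (h : Relation.ReflTransGen r s e) :
    ∃ (j : ℕ) (W : ℕ → α), W 0 = s ∧ W j = e ∧ ∀ i, i < j → r (W i) (W (i + 1)) := by
  induction h with
  | refl => exact ⟨0, fun _ => s, rfl, rfl, fun i hi => absurd hi (Nat.not_lt_zero i)⟩
  | tail h₁ h₂ ih =>
    rename_i u e'
    obtain ⟨j, W, hW0, hWj, hstep⟩ := ih
    refine ⟨j + 1, fun i => if i ≤ j then W i else e', by simp [hW0], by simp, ?_⟩
    intro i hi
    rcases Nat.lt_or_ge i j with hij | hij
    · simpa [Nat.le_of_lt hij, Nat.succ_le_of_lt hij] using hstep i hij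
    · have : i = j := Nat.le_antisymm (Nat.lt_succ_iff.mp hi) hij
      subst this
      simpa [hWj] using h₂

/-- The walk starting at the tap can never come back out of the tap. -/
theorem no_return (ha : Function.Involutive a) (hb : Function.Involutive b) {E}
    (h : Relation.ReflTransGen (Step a b) none E) (hE : a E = none) : E = none := by
  by_contra hEn
  obtain ⟨j, W, hW0, hWj, hstep⟩ := rtg_idx h
  -- palindrome property
  have key : ∀ i, 2 * i ≤ j → a (W i) = W (j - i) := by
    intro i
    induction i with
    | zero =>
      intro _
      have : E = a none := by rw [← hE, ha]
      simp [hW0, hWj, ← this]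
    | succ i ih =>
      intro h2
      have hij : 2 * i ≤ j := by omega
      have hai := ih hij
      have hilt : i < j := by omega
      obtain ⟨p, hp, hpne, hbp, hWi1⟩ := hstep i hilt
      have hjlt : j - i - 1 < j := by omega
      have hji : j - i - 1 + 1 = j - i := by omega
      obtain ⟨r, hr, hrne, hbr, hWji⟩ := hstep (j - i - 1) hjlt
      rw [hji] at hWji
      -- W (j - i) = a (W i) = some p, and W (j-i) = some (b r)
      have hbrp : b r = p := by
        have : some (b r) = some p := by rw [← hWji, ← hai, hp]
        exact Option.some.inj this
      have hrbp : r = b p := by rw [← hbrp, hb]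
      have : a (W (j - i - 1)) = W (i + 1) := by
        rw [hr, hrbp, ← hWi1]
      have := congrArg a this
      rw [ha] at this
      have hidx : j - (i + 1) = j - i - 1 := by omega
      rw [hidx, ← this]
  -- midpoint contradiction
  have hjpos : 0 < j := by
    rcases Nat.eq_zero_or_pos j with rfl | h
    · exact absurd (by rw [← hWj, hW0]) hEn
    · exact h
  rcases Nat.even_or_odd j with ⟨i, hi⟩ | ⟨i, hi⟩
  · -- j = 2 i
    have h2i : 2 * i ≤ j := by omega
    have := key i h2i
    have hii : j - i = i := by omega
    rw [hii] at this
    have hilt : i < j := by omega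
    obtain ⟨p, hp, hpne, _, _⟩ := hstep i hilt
    exact hpne (by rw [this])
  · -- j = 2 i + 1
    have h2i : 2 * i ≤ j := by omega
    have := key i h2i
    have hii : j - i = i + 1 := by omega
    rw [hii] at this
    have hilt : i < j := by omega
    obtain ⟨p, hp, hpne, hbp, hWi1⟩ := hstep i hilt
    rw [hWi1] at this
    rw [hp] at this
    exact hbp (Option.some.inj this).symm

/-- Reversing a single step. -/
theorem step_rev (ha : Function.Involutive a) (hb : Function.Involutive b)
    {e e' : Option ι} (h : Step a b e e') (h' : a e' ≠ e') :
    Step a b (a e') (a e) := by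
  obtain ⟨p, hp, hpne, hbp, rfl⟩ := h
  refine ⟨b p, by rw [ha], ?_, by rw [hb]; exact fun hc => hbp hc.symm, by rw [hb, hp]⟩
  rw [ha]
  exact fun hc => h' hc.symm

/-- Reversing a chain of steps; we need some step out of the final state to know the
  chain does not end at a fixed point. -/
theorem rtg_rev (ha : Function.Involutive a) (hb : Function.Involutive b)
    {u v : Option ι} (h : Relation.ReflTransGen (Step a b) u v)
    (hout : ∃ w, Step a b v w) :
    Relation.ReflTransGen (Step a b) (a v) (a u) := by
  induction h using Relation.ReflTransGen.head_induction_on with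
  | refl => exact Relation.ReflTransGen.refl
  | head h' hrest ih =>
    rename_i s t
    have htout : ∃ w, Step a b t w := by
      rcases hrest.cases_head with rfl | ⟨w, hw, _⟩
      · exact hout
      · exact ⟨w, hw⟩
    obtain ⟨w, hw⟩ := htout
    have hat : a t ≠ t := by
      obtain ⟨p, hp, hpne, _, _⟩ := hw
      exact hpne
    exact ih.tail (step_rev ha hb h' hat)

end StepAux

/-! ### Walk lemmas -/

section WalkAux

variable {m : ℕ} {a : Option (Fin m) → Option (Fin m)} {b : Fin m → Fin m}

/-- The partial step function of the walk. -/
def pstep (a : Option (Fin m) → Option (Fin m)) (b : Fin m → Fin m)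
    (e : Option (Fin m)) : Option (Option (Fin m)) :=
  if a e = e then none
  else
    match a e with
    | none => none
    | some p => if b p = p then none else some (some (b p))

/-- The trajectory of the walk from the tap. -/
def traj (a : Option (Fin m) → Option (Fin m)) (b : Fin m → Fin m) :
    ℕ → Option (Option (Fin m))
  | 0 => some none
  | n + 1 => (traj a b n).bind (pstep a b)

theorem walk_zero (e : Option (Fin m)) : walk a b 0 e = Sum.inl e := rfl

theorem walk_succ (n : ℕ) (e : Option (Fin m)) :
    walk a b (n + 1) e =
      if a e = e then Sum.inl e
      else
        match a e with
        | none => Sum.inl none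
        | some p => if b p = p then Sum.inr p else walk a b n (some (b p)) := rfl

theorem pstep_of_step {e e' : Option (Fin m)} (h : Step a b e e') :
    pstep a b e = some e' := by
  obtain ⟨p, hp, hpne, hbp, rfl⟩ := h
  have hne' : some p ≠ e := hp ▸ hpne
  simp [pstep, hp, hpne, hbp, hne']

theorem step_of_pstep {e e' : Option (Fin m)} (h : pstep a b e = some e') :
    Step a b e e' := by
  unfold pstep at h
  split at h
  · cases h
  · rename_i hne
    rcases hae : a e with _ | p
    · rw [hae] at h; cases h
    · rw [hae] at h
      simp only at h
      split at h
      · cases h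
      · rename_i hbp
        exact ⟨p, hae, hne, hbp, (Option.some.inj h).symm⟩

theorem walk_pstep_some {e e' : Option (Fin m)} (h : pstep a b e = some e') (n : ℕ) :
    walk a b (n + 1) e = walk a b n e' := by
  obtain ⟨p, hp, hpne, hbp, rfl⟩ := step_of_pstep h
  have hne' : some p ≠ e := hp ▸ hpne
  rw [walk_succ]
  simp [hp, hpne, hbp, hne']

theorem walk_pstep_none {e : Option (Fin m)} (h : pstep a b e = none) (n : ℕ) :
    walk a b (n + 1) e = walk a b 1 e := by
  unfold pstep at h
  rw [walk_succ, walk_succ]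
  split at h
  · rename_i hfix; simp [hfix]
  · rename_i hne
    rcases hae : a e with _ | p
    · simp [hae, hne]
    · rw [hae] at h
      simp only at h
      split at h
      · rename_i hbp; simp [hae, hne, hbp]
      · cases h

theorem walk_fix {e : Option (Fin m)} (h : a e = e) (n : ℕ) :
    walk a b n e = Sum.inl e := by
  cases n with
  | zero => rfl
  | succ n => rw [walk_succ]; simp [h]

theorem walk_inr {e : Option (Fin m)} {p : Fin m} (h1 : a e = some p) (h2 : a e ≠ e)
    (h3 : b p = p) (n : ℕ) : walk a b (n + 1) e = Sum.inr p := by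
  have hne' : some p ≠ e := h1 ▸ h2
  rw [walk_succ]; simp [h1, h2, h3, hne']

theorem traj_some_of_succ {n : ℕ} {e' : Option (Fin m)}
    (h : traj a b (n + 1) = some e') :
    ∃ e, traj a b n = some e ∧ pstep a b e = some e' := by
  unfold traj at h
  rcases ht : traj a b n with _ | e
  · rw [ht] at h; cases h
  · rw [ht] at h; exact ⟨e, rfl, h⟩

theorem traj_rtg {n : ℕ} {e : Option (Fin m)} (h : traj a b n = some e) :
    Relation.ReflTransGen (Step a b) none e := by
  induction n generalizing e with
  | zero =>
    cases h; exact Relation.ReflTransGen.refl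
  | succ n ih =>
    obtain ⟨e₁, ht, hp⟩ := traj_some_of_succ h
    exact (ih ht).tail (step_of_pstep hp)

theorem traj_walk {n : ℕ} {e : Option (Fin m)} (h : traj a b n = some e) (k : ℕ) :
    walk a b (n + k) none = walk a b k e := by
  induction n generalizing e k with
  | zero => cases h; simp
  | succ n ih =>
    obtain ⟨e₁, ht, hp⟩ := traj_some_of_succ h
    have : n + 1 + k = n + (k + 1) := by omega
    rw [this, ih ht (k + 1), walk_pstep_some hp]

theorem pstep_inj (ha : Function.Involutive a) (hb : Function.Involutive b)
    {e₁ e₂ e' : Option (Fin m)} (h₁ : pstep a b e₁ = some e')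
    (h₂ : pstep a b e₂ = some e') : e₁ = e₂ := by
  obtain ⟨p₁, hp₁, _, _, he₁⟩ := step_of_pstep h₁
  obtain ⟨p₂, hp₂, _, _, he₂⟩ := step_of_pstep h₂
  rw [he₁] at he₂
  have hpp : p₂ = p₁ := hb.injective (Option.some.inj he₂).symm
  subst hpp
  have h3 := congrArg a (hp₁.trans hp₂.symm)
  rwa [ha, ha] at h3

theorem traj_succ_ne_some_none {n : ℕ} : traj a b (n + 1) ≠ some none := by
  intro h
  obtain ⟨e, _, hp⟩ := traj_some_of_succ h
  obtain ⟨p, _, _, _, he⟩ := step_of_pstep hp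
  cases he

theorem traj_inj (ha : Function.Involutive a) (hb : Function.Involutive b) :
    ∀ {i j : ℕ}, i < j → traj a b j ≠ none → traj a b i ≠ traj a b j := by
  intro i
  induction i with
  | zero =>
    intro j hij hj
    rcases j with _ | j
    · omega
    · intro hc
      exact traj_succ_ne_some_none (a := a) (b := b) (n := j) hc.symm
  | succ i ih =>
    intro j hij hj
    rcases j with _ | j
    · omega
    · intro hc
      rcases hjv : traj a b (j + 1) with _ | ej
      · exact hj hjv
      · obtain ⟨e₂, ht₂, hp₂⟩ := traj_some_of_succ hjv
        rw [hjv] at hc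
        obtain ⟨e₁, ht₁, hp₁⟩ := traj_some_of_succ hc
        have : e₁ = e₂ := pstep_inj ha hb hp₁ hp₂
        subst this
        have hlt : i < j := by omega
        exact ih hlt (ht₂ ▸ (by simp)) (ht₁.trans ht₂.symm)

theorem exists_pause (ha : Function.Involutive a) (hb : Function.Involutive b) :
    ∃ i ≤ m + 1, ∃ e, traj a b i = some e ∧ pstep a b e = none := by
  by_contra hcon
  push_neg at hcon
  have alive : ∀ i ≤ m + 2, ∃ e, traj a b i = some e := by
    intro i
    induction i with
    | zero => exact fun _ => ⟨none, rfl⟩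
    | succ i ih =>
      intro hi
      obtain ⟨e, he⟩ := ih (by omega)
      rcases hps : pstep a b e with _ | e'
      · exact absurd hps (hcon i (by omega) e he)
      · exact ⟨e', by unfold traj; rw [he]; exact hps⟩
  choose φ hφ using fun i : Fin (m + 2) => alive i.1 (by omega)
  have hinj : Function.Injective φ := by
    intro i j hij
    by_contra hne
    have h1 : traj a b i.1 = traj a b j.1 := by rw [hφ i, hφ j, hij]
    rcases lt_trichotomy i.1 j.1 with hlt | heq | hlt
    · exact traj_inj ha hb hlt (by rw [hφ j]; simp) h1
    · exact hne (Fin.ext heq)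
    · exact traj_inj ha hb hlt (by rw [hφ i]; simp) h1.symm
  have hcard := Fintype.card_le_of_injective φ hinj
  rw [Fintype.card_fin, Fintype.card_option, Fintype.card_fin] at hcard
  omega

theorem walk_stable (ha : Function.Involutive a) (hb : Function.Involutive b) :
    ∃ E, Relation.ReflTransGen (Step a b) none E ∧ pstep a b E = none ∧
      ∀ k, 2 * m + 2 ≤ k → walk a b k none = walk a b 1 E := by
  obtain ⟨i, hi, e, hte, hpe⟩ := exists_pause ha hb
  refine ⟨e, traj_rtg hte, hpe, ?_⟩
  intro k hk
  have h1 : k = i + (k - i) := by omega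
  rw [h1, traj_walk hte]
  have h2 : k - i = (k - i - 1) + 1 := by omega
  rw [h2, walk_pstep_none hpe]

theorem walk_master (ha : Function.Involutive a) (hb : Function.Involutive b)
    {r : Option (Fin m) ⊕ Fin m}
    (h : ∃ n₀, ∀ k, n₀ ≤ k → walk a b k none = r) :
    walk a b (2 * m + 2) none = r := by
  obtain ⟨E, _, hpE, hstab⟩ := walk_stable (a := a) (b := b) ha hb
  obtain ⟨n₀, hn₀⟩ := h
  have h1 := hstab (max n₀ (2 * m + 2)) (le_max_right _ _)
  have h2 := hn₀ (max n₀ (2 * m + 2)) (le_max_left _ _)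
  rw [hstab (2 * m + 2) le_rfl, ← h1, h2]

theorem walk_rtg {E : Option (Fin m)} (h : Relation.ReflTransGen (Step a b) none E) :
    ∃ n₀, ∀ k, walk a b (n₀ + k) none = walk a b k E := by
  induction h with
  | refl => exact ⟨0, fun k => by simp⟩
  | tail h₁ h₂ ih =>
    obtain ⟨n₀, hn₀⟩ := ih
    exact ⟨n₀ + 1, fun k => by
      have : n₀ + 1 + k = n₀ + (k + 1) := by omega
      rw [this, hn₀ (k + 1), walk_pstep_some (pstep_of_step h₂)]⟩

end WalkAux


/-! ### Realizing abstract machines as protocols, and digesting protocols -/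

section Realize

variable {X Y : Type*}

/-- Transport of steps along a relabeling of the pipes. -/
theorem step_map {ι κ : Type*} (σ : ι ≃ κ) {a : Option ι → Option ι} {b : ι → ι}
    {e e' : Option ι} (h : Step a b e e') :
    Step (fun u => Option.map σ (a (Option.map σ.symm u)))
      (fun p => σ (b (σ.symm p))) (Option.map σ e) (Option.map σ e') := by
  have key : ∀ v : Option ι, Option.map σ.symm (Option.map σ v) = v := by
    intro v; cases v <;> simp
  obtain ⟨p, hp, hpne, hbp, rfl⟩ := h
  refine ⟨σ p, ?_, ?_, ?_, ?_⟩
  · show Option.map σ (a (Option.map σ.symm (Option.map σ e))) = some (σ p)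
    rw [key, hp]; rfl
  · show Option.map σ (a (Option.map σ.symm (Option.map σ e))) ≠ Option.map σ e
    rw [key, hp]
    intro hc
    have h5 : some p = e := Option.map_injective σ.injective (by simpa using hc)
    exact hpne (hp.trans h5)
  · simp only [Equiv.symm_apply_apply]
    intro hc
    exact hbp (σ.injective hc)
  · simp [Equiv.symm_apply_apply]

/-- An abstract machine whose walks terminate correctly can be realized as a protocol
on `Fin (card ι)`. -/
theorem realize {f : X → Y → Bool} {ι : Type*} [Fintype ι]
    (a : X → Option ι → Option ι) (b : Y → ι → ι)
    (ha : ∀ x, Function.Involutive (a x)) (hb : ∀ y, Function.Involutive (b y))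
    (spec : ∀ x y, ∃ E, Relation.ReflTransGen (Step (a x) (b y)) none E ∧
      ((f x y = false ∧ a x E = E) ∨
        (f x y = true ∧ ∃ p, a x E = some p ∧ a x E ≠ E ∧ b y p = p))) :
    ∃ P : Protocol X Y (Fintype.card ι), P.Computes f := by
  classical
  set n := Fintype.card ι with hn
  let σ : ι ≃ Fin n := Fintype.equivFin ι
  have key : ∀ v : Option ι, Option.map σ.symm (Option.map σ v) = v := by
    intro v; cases v <;> simp
  have key' : ∀ v : Option (Fin n), Option.map σ (Option.map σ.symm v) = v := by
    intro v; cases v <;> simp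
  let aF : X → Option (Fin n) → Option (Fin n) :=
    fun x u => Option.map σ (a x (Option.map σ.symm u))
  let bF : Y → Fin n → Fin n := fun y p => σ (b y (σ.symm p))
  have haF : ∀ x, Function.Involutive (aF x) := by
    intro x u
    show Option.map σ (a x (Option.map σ.symm (Option.map σ (a x (Option.map σ.symm u))))) = u
    rw [key, ha x, key']
  have hbF : ∀ y, Function.Involutive (bF y) := by
    intro y p
    show σ (b y (σ.symm (σ (b y (σ.symm p))))) = p
    rw [Equiv.symm_apply_apply, hb y, Equiv.apply_symm_apply]
  refine ⟨⟨aF, bF, haF, hbF⟩, ?_⟩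
  intro x y
  obtain ⟨E, hrtg, hterm⟩ := spec x y
  have hrtgF : Relation.ReflTransGen (Step (aF x) (bF y)) none (Option.map σ E) := by
    have := Relation.ReflTransGen.lift (Option.map σ)
      (fun u v h => step_map σ (a := a x) (b := b y) h) _ _ hrtg
    simpa [Function.onFun] using this
  obtain ⟨n₀, hn₀⟩ := walk_rtg hrtgF
  show (walk (aF x) (bF y) (2 * n + 2) none).isRight = f x y
  rcases hterm with ⟨hf, hfix⟩ | ⟨hf, p, hp, hne, hbp⟩
  · have hfixF : aF x (Option.map σ E) = Option.map σ E := by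
      show Option.map σ (a x (Option.map σ.symm (Option.map σ E))) = _
      rw [key, hfix]
    have hw : walk (aF x) (bF y) (2 * n + 2) none = Sum.inl (Option.map σ E) := by
      refine walk_master (haF x) (hbF y) ⟨n₀, fun k hk => ?_⟩
      have h2 : k = n₀ + (k - n₀) := by omega
      rw [h2, hn₀, walk_fix hfixF]
    rw [hw, hf]; rfl
  · have h1 : aF x (Option.map σ E) = some (σ p) := by
      show Option.map σ (a x (Option.map σ.symm (Option.map σ E))) = _
      rw [key, hp]; rfl
    have h2 : aF x (Option.map σ E) ≠ Option.map σ E := by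
      rw [h1]
      intro hc
      have : E = some p := Option.map_injective σ.injective (by simpa using hc.symm)
      exact hne (by rw [hp, ← this])
    have h3 : bF y (σ p) = σ p := by
      show σ (b y (σ.symm (σ p))) = σ p
      rw [Equiv.symm_apply_apply, hbp]
    have hw : walk (aF x) (bF y) (2 * n + 2) none = Sum.inr (σ p) := by
      refine walk_master (haF x) (hbF y) ⟨n₀ + 1, fun k hk => ?_⟩
      have h4 : k = n₀ + ((k - n₀ - 1) + 1) := by omega
      rw [h4, hn₀, walk_inr h1 h2 h3]
    rw [hw, hf]; rfl

/-- Analysis of a protocol: the walk from the tap terminates, at an Alice-fixed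
end iff the value is `false` and entering a Bob-fixed pipe iff the value is `true`. -/
theorem digest {m : ℕ} (P : Protocol X Y m) {f : X → Y → Bool} (hP : P.Computes f)
    (x : X) (y : Y) :
    ∃ E, Relation.ReflTransGen (Step (P.alice x) (P.bob y)) none E ∧
      ((f x y = false ∧ P.alice x E = E) ∨
        (f x y = true ∧ ∃ p, P.alice x E = some p ∧ P.alice x E ≠ E ∧ P.bob y p = p)) := by
  obtain ⟨E, hrtg, hpE, hstab⟩ := walk_stable (P.alice_inv x) (P.bob_inv y)
  have hspill : (walk (P.alice x) (P.bob y) (2 * m + 2) none).isRight = f x y := hP x y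
  rw [hstab _ le_rfl] at hspill
  refine ⟨E, hrtg, ?_⟩
  unfold pstep at hpE
  split at hpE
  · rename_i hfix
    rw [walk_fix hfix] at hspill
    exact Or.inl ⟨hspill.symm, hfix⟩
  · rename_i hnfix
    rcases hae : P.alice x E with _ | p
    · have hEnone := no_return (P.alice_inv x) (P.bob_inv y) hrtg hae
      rw [hEnone] at hae hnfix
      exact absurd hae hnfix
    · rw [hae] at hpE
      simp only at hpE
      split at hpE
      · rename_i hbp
        rw [show (1 : ℕ) = 0 + 1 from rfl, walk_inr hae hnfix hbp] at hspill
        exact Or.inr ⟨hspill.symm, p, rfl, hae ▸ hnfix, hbp⟩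
      · cases hpE

/-- Every function is computed by some garden-hose protocol. -/
theorem gh_exists [Fintype X] (f : X → Y → Bool) :
    ∃ m, ∃ P : Protocol X Y m, P.Computes f := by
  classical
  let a : X → Option (X ⊕ X) → Option (X ⊕ X) := fun x e =>
    if e = none then some (Sum.inl x) else if e = some (Sum.inl x) then none else e
  let b : Y → (X ⊕ X) → (X ⊕ X) := fun y p =>
    match p with
    | Sum.inl x' => if f x' y then Sum.inl x' else Sum.inr x'
    | Sum.inr x' => if f x' y then Sum.inr x' else Sum.inl x'
  have ha : ∀ x, Function.Involutive (a x) := by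
    intro x e
    by_cases h1 : e = none
    · subst h1; simp [a]
    · by_cases h2 : e = some (Sum.inl x)
      · subst h2; simp [a]
      · simp [a, h1, h2]
  have hb : ∀ y, Function.Involutive (b y) := by
    intro y p
    rcases p with x' | x' <;> by_cases hf : f x' y <;> simp [b, hf]
  have spec : ∀ x y, ∃ E, Relation.ReflTransGen (Step (a x) (b y)) none E ∧
      ((f x y = false ∧ a x E = E) ∨
        (f x y = true ∧ ∃ p, a x E = some p ∧ a x E ≠ E ∧ b y p = p)) := by
    intro x y
    by_cases hf : f x y
    · refine ⟨none, Relation.ReflTransGen.refl, Or.inr ⟨hf, Sum.inl x, by simp [a], by simp [a], by simp [b, hf]⟩⟩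
    · refine ⟨some (Sum.inr x), ?_, Or.inl ⟨by simpa using hf, by simp [a]⟩⟩
      refine Relation.ReflTransGen.single ⟨Sum.inl x, by simp [a], by simp [a], ?_, ?_⟩
      · simp only [b]
        rw [if_neg hf]
        simp
      · simp only [b]
        rw [if_neg hf]
  obtain ⟨P, hP⟩ := realize a b ha hb spec
  exact ⟨_, P, hP⟩

/-- An optimal protocol. -/
theorem exists_opt [Fintype X] [Fintype Y] (f : X → Y → Bool) :
    ∃ P : Protocol X Y (GH f), P.Computes f := by
  obtain ⟨m, P, hP⟩ := gh_exists f
  exact Nat.sInf_mem (s := {m | ∃ P : Protocol X Y m, P.Computes f}) ⟨m, P, hP⟩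

end Realize


/-! ### Port machines -/

section PMdef

variable {X Y : Type*}

/-- A "port machine": a garden-hose-like configuration on an abstract set `ι` of pipes
(with tap `none`), together with designated output ports `out x c` (Alice-side ends,
fixed by Alice's pairing) such that the water from the tap reaches the port
`out x (g x y)`, plus optionally a completely unconnected "spare" pipe, which is
guaranteed to exist whenever `g` can take the value `true`. -/
structure PM (X Y : Type*) (ι : Type*) (g : X → Y → Bool) where
  a : X → Option ι → Option ι
  b : Y → ι → ι
  ainv : ∀ x, Function.Involutive (a x)
  binv : ∀ y, Function.Involutive (b y)
  out : X → Bool → Option ι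
  spare : Option ι
  out_fixed : ∀ x c, a x (out x c) = out x c
  out_ne : ∀ x y, g x y = true → out x false ≠ out x true
  spare_a : ∀ x s, spare = some s → a x (some s) = some s
  spare_b : ∀ y s, spare = some s → b y s = s
  spare_out : ∀ x c s, spare = some s → out x c ≠ some s
  g_spare : ∀ x y, g x y = true → spare.isSome
  reach : ∀ x y, Relation.ReflTransGen (Step (a x) (b y)) none (out x (g x y))

/-- The empty machine computes the constant `false`. -/
def PM.base : PM X Y Empty (fun _ _ => false) where
  a := fun _ e => e
  b := fun _ p => p
  ainv := fun _ _ => rfl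
  binv := fun _ _ => rfl
  out := fun _ _ => none
  spare := none
  out_fixed := fun _ _ => rfl
  out_ne := fun _ _ h => by cases h
  spare_a := fun _ _ h => by cases h
  spare_b := fun _ _ h => by cases h
  spare_out := fun _ _ _ h => by cases h
  g_spare := fun _ _ h => by cases h
  reach := fun _ _ => Relation.ReflTransGen.refl

/-- Transport a machine along a pointwise equality of functions. -/
def PM.congr {ι : Type*} {g g' : X → Y → Bool} (M : PM X Y ι g)
    (h : ∀ x y, g x y = g' x y) : PM X Y ι g' where
  a := M.a
  b := M.b
  ainv := M.ainv
  binv := M.binv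
  out := M.out
  spare := M.spare
  out_fixed := M.out_fixed
  out_ne := fun x y hg => M.out_ne x y (by rw [h x y]; exact hg)
  spare_a := M.spare_a
  spare_b := M.spare_b
  spare_out := M.spare_out
  g_spare := fun x y hg => M.g_spare x y (by rw [h x y]; exact hg)
  reach := fun x y => h x y ▸ M.reach x y

/-- A port machine yields a protocol on `card ι` pipes: route the `true` port into the
spare pipe. -/
theorem PM.gh_le [Fintype X] [Fintype Y] {ι : Type*} [Fintype ι] {g : X → Y → Bool}
    (M : PM X Y ι g) : GH g ≤ Fintype.card ι := by
  classical
  let aF : X → Option ι → Option ι := fun x e =>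
    match M.spare with
    | none => M.a x e
    | some s =>
      if M.out x true ≠ M.out x false then
        (if e = M.out x true then some s
         else if e = some s then M.out x true
         else M.a x e)
      else M.a x e
  have haF : ∀ x, Function.Involutive (aF x) := by
    intro x e
    show aF x (aF x e) = e
    rcases hsp : M.spare with _ | s
    · simp only [aF, hsp]
      exact M.ainv x e
    · simp only [aF, hsp]
      by_cases hne : M.out x true ≠ M.out x false
      · rw [if_pos hne, if_pos hne]
        by_cases h1 : e = M.out x true
        · rw [if_pos h1]
          rw [if_neg, if_pos rfl, h1]
          intro hc
          exact M.spare_out x true s hsp hc.symm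
        · rw [if_neg h1]
          by_cases h2 : e = some s
          · rw [if_pos h2, if_pos rfl, h2]
          · rw [if_neg h2]
            have hx1 : M.a x e ≠ M.out x true := by
              intro hc
              have := congrArg (M.a x) hc
              rw [M.ainv x, M.out_fixed x true] at this
              exact h1 this
            have hx2 : M.a x e ≠ some s := by
              intro hc
              have := congrArg (M.a x) hc
              rw [M.ainv x, M.spare_a x s hsp] at this
              exact h2 this
            rw [if_neg hx1, if_neg hx2]
            exact M.ainv x e
      · rw [if_neg hne, if_neg hne]
        exact M.ainv x e
  have spec : ∀ x y, ∃ E, Relation.ReflTransGen (Step (aF x) (M.b y)) none E ∧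
      ((g x y = false ∧ aF x E = E) ∨
        (g x y = true ∧ ∃ p, aF x E = some p ∧ aF x E ≠ E ∧ M.b y p = p)) := by
    intro x y
    have hlift : ∀ e e', Step (M.a x) (M.b y) e e' → Step (aF x) (M.b y) e e' := by
      rintro e e' ⟨p, hp, hpne, hbp, rfl⟩
      have : aF x e = M.a x e := by
        rcases hsp : M.spare with _ | s
        · simp only [aF, hsp]
        · simp only [aF, hsp]
          by_cases hne : M.out x true ≠ M.out x false
          · rw [if_pos hne]
            have h1 : e ≠ M.out x true := by
              intro hc; subst hc; exact hpne (M.out_fixed x true)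
            have h2 : e ≠ some s := by
              intro hc; subst hc; exact hpne (M.spare_a x s hsp)
            rw [if_neg h1, if_neg h2]
          · rw [if_neg hne]
      exact ⟨p, this ▸ hp, this ▸ hpne, hbp, rfl⟩
    have hreach : Relation.ReflTransGen (Step (aF x) (M.b y)) none (M.out x (g x y)) :=
      Relation.ReflTransGen.mono hlift _ _ (M.reach x y)
    refine ⟨M.out x (g x y), hreach, ?_⟩
    rcases hg : g x y with _ | _
    · left
      refine ⟨rfl, ?_⟩
      rcases hsp : M.spare with _ | s
      · simp only [aF, hsp]
        exact M.out_fixed x false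
      · simp only [aF, hsp]
        by_cases hne : M.out x true ≠ M.out x false
        · rw [if_pos hne, if_neg (fun hc => hne hc.symm),
            if_neg (M.spare_out x false s hsp)]
          exact M.out_fixed x false
        · rw [if_neg hne]
          exact M.out_fixed x false
    · right
      obtain ⟨s, hsp⟩ := Option.isSome_iff_exists.mp (M.g_spare x y hg)
      have hne := M.out_ne x y hg
      have hval : aF x (M.out x true) = some s := by
        simp only [aF, hsp]
        rw [if_pos (show M.out x true ≠ M.out x false from fun hc => hne hc.symm)]
        simp
      refine ⟨rfl, s, hval, ?_, M.spare_b y s hsp⟩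
      rw [hval]
      exact fun hc => M.spare_out x true s hsp hc.symm
  obtain ⟨P, hP⟩ := realize aF M.b haF M.binv spec
  exact Nat.sInf_le ⟨P, hP⟩

end PMdef


/-! ### The parity gadget: attaching a protocol to a port machine -/

section Attach

variable {X Y : Type*} {ι : Type*} {g : X → Y → Bool} {m : ℕ}

/-- Pipes of the extended machine: the old pipes plus four copies of the pipes of the
new protocol.  A new pipe `(b, false, w)` is pipe `w` in the forward copy for incoming
parity `b`; a new pipe `(c, true, w)` is pipe `w` in the reverse copy leading to the
output port for parity `c`. -/
abbrev Cend (ι : Type*) (m : ℕ) := ι ⊕ (Bool × Bool × Fin m)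

/-- Embedding of old ends. -/
def eo : Option ι → Option (Cend ι m) := Option.map Sum.inl

theorem eo_inj : Function.Injective (eo : Option ι → Option (Cend ι m)) :=
  Option.map_injective Sum.inl_injective

@[simp] theorem eo_ne_inr (u : Option ι) (v : Bool × Bool × Fin m) :
    eo u ≠ some (Sum.inr v) := by cases u <;> simp [eo]

@[simp] theorem eo_none : (eo none : Option (Cend ι m)) = none := rfl

@[simp] theorem eo_some (p : ι) : (eo (some p) : Option (Cend ι m)) = some (Sum.inl p) := rfl

variable (M : PM X Y ι g) (Q : Protocol X Y m)

theorem inr_ne_eo (v : Bool × Bool × Fin m) (u : Option ι) :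
    some (Sum.inr v) ≠ (eo u : Option (Cend ι m)) := fun hc => eo_ne_inr u v hc.symm

open scoped Classical

/-- Bob's pairing in the extended machine. -/
noncomputable def attB (y : Y) : Cend ι m → Cend ι m := fun P =>
  match P with
  | Sum.inl p => Sum.inl (M.b y p)
  | Sum.inr (b, false, w) =>
      if M.spare = none ∧ b = true then Sum.inr (b, false, w)
      else if Q.bob y w = w then Sum.inr (!b, true, w) else Sum.inr (b, false, Q.bob y w)
  | Sum.inr (c, true, w) =>
      if Q.bob y w = w then
        (if M.spare = none ∧ c = false then Sum.inr (c, true, w)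
         else Sum.inr (!c, false, w))
      else Sum.inr (c, true, Q.bob y w)

/-- Alice's pairing in the extended machine. -/
noncomputable def attA (x : X) : Option (Cend ι m) → Option (Cend ι m) := fun e =>
  match Q.alice x none with
  | none =>
    match e with
    | none => eo (M.a x none)
    | some (Sum.inl p) => eo (M.a x (some p))
    | some (Sum.inr v) => some (Sum.inr v)
  | some p₁ =>
    if e = eo (M.out x false) then some (Sum.inr (false, false, p₁))
    else if M.spare ≠ none ∧ M.out x true ≠ M.out x false ∧ e = eo (M.out x true) then
      some (Sum.inr (true, false, p₁))
    else
      match e with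
      | none => eo (M.a x none)
      | some (Sum.inl p) => eo (M.a x (some p))
      | some (Sum.inr (b, false, w)) =>
          if M.spare = none ∧ b = true then some (Sum.inr (b, false, w))
          else
            match Q.alice x (some w) with
            | none =>
                if b then
                  (if M.out x true ≠ M.out x false then eo (M.out x true)
                   else some (Sum.inr (b, false, w)))
                else eo (M.out x false)
            | some q =>
                if q = w then some (Sum.inr (b, true, w))
                else some (Sum.inr (b, false, q))
      | some (Sum.inr (c, true, w)) =>
          match Q.alice x (some w) with
          | none => some (Sum.inr (c, true, w))
          | some q =>
              if q = w then
                (if M.spare = none ∧ c = true then some (Sum.inr (c, true, w))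
                 else some (Sum.inr (c, false, w)))
              else some (Sum.inr (c, true, q))

/-- Output ports of the extended machine. -/
def attOut (x : X) (c : Bool) : Option (Cend ι m) :=
  match Q.alice x none with
  | some p₁ => some (Sum.inr (c, true, p₁))
  | none => eo (M.out x c)

/-- Spare pipe of the extended machine. -/
def attSpare : Option (Cend ι m) :=
  match M.spare with
  | some s => some (Sum.inl s)
  | none => if h : 0 < m then some (Sum.inr (true, false, (⟨0, h⟩ : Fin m))) else none

/-! #### Computation lemmas, dead case -/

theorem attA_dead {x : X} (hτ : Q.alice x none = none) (u : Option ι) :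
    attA M Q x (eo u) = eo (M.a x u) := by
  cases u <;> simp [attA, hτ, eo]

theorem attA_dead_inr {x : X} (hτ : Q.alice x none = none) (v : Bool × Bool × Fin m) :
    attA M Q x (some (Sum.inr v)) = some (Sum.inr v) := by
  simp [attA, hτ]

/-! #### Computation lemmas, live case -/

variable {x : X} {p₁ : Fin m}

theorem attA_out0 (hτ : Q.alice x none = some p₁) :
    attA M Q x (eo (M.out x false)) = some (Sum.inr (false, false, p₁)) := by
  simp [attA, hτ]

theorem attA_out1 (hτ : Q.alice x none = some p₁) (hsp : M.spare ≠ none)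
    (hne : M.out x true ≠ M.out x false) :
    attA M Q x (eo (M.out x true)) = some (Sum.inr (true, false, p₁)) := by
  simp only [attA, hτ]
  rw [if_neg (fun hc => hne (eo_inj hc))]
  simp [hsp, hne]

theorem attA_old_exc (hτ : Q.alice x none = some p₁) {u : Option ι}
    (h1 : (eo u : Option (Cend ι m)) ≠ eo (M.out x false))
    (h2 : ¬(M.spare ≠ none ∧ M.out x true ≠ M.out x false ∧
      (eo u : Option (Cend ι m)) = eo (M.out x true))) :
    attA M Q x (eo u) = eo (M.a x u) := by
  cases u with
  | none => simp only [attA, hτ]; rw [if_neg h1, if_neg h2]; simp [eo]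
  | some p => simp only [attA, hτ]; rw [if_neg h1, if_neg h2]; simp [eo]

theorem attA_old (hτ : Q.alice x none = some p₁) {u : Option ι} (hne : M.a x u ≠ u) :
    attA M Q x (eo u) = eo (M.a x u) := by
  refine attA_old_exc M Q hτ ?_ ?_
  · intro hc
    exact hne (by rw [eo_inj hc, M.out_fixed])
  · rintro ⟨-, -, hc⟩
    exact hne (by rw [eo_inj hc, M.out_fixed])

theorem attA_F_entry (hτ : Q.alice x none = some p₁) {b : Bool}
    (hok : ¬(M.spare = none ∧ b = true)) :
    attA M Q x (some (Sum.inr (b, false, p₁))) =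
      (if b then
        (if M.out x true ≠ M.out x false then eo (M.out x true)
         else some (Sum.inr (b, false, p₁)))
       else eo (M.out x false)) := by
  have hback := Q.alice_inv x none
  rw [hτ] at hback
  simp only [attA, hτ]
  rw [if_neg (inr_ne_eo _ _), if_neg (by rintro ⟨-, -, hc⟩; exact inr_ne_eo _ _ hc)]
  simp [hback, hok]

theorem attA_F_int (hτ : Q.alice x none = some p₁) {b : Bool} {w q : Fin m}
    (hok : ¬(M.spare = none ∧ b = true)) (hq : Q.alice x (some w) = some q) (hqw : q ≠ w) :
    attA M Q x (some (Sum.inr (b, false, w))) = some (Sum.inr (b, false, q)) := by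
  simp only [attA, hτ]
  rw [if_neg (inr_ne_eo _ _), if_neg (by rintro ⟨-, -, hc⟩; exact inr_ne_eo _ _ hc)]
  simp [hok, hq, hqw]

theorem attA_F_cross (hτ : Q.alice x none = some p₁) {b : Bool} {w : Fin m}
    (hok : ¬(M.spare = none ∧ b = true)) (hq : Q.alice x (some w) = some w) :
    attA M Q x (some (Sum.inr (b, false, w))) = some (Sum.inr (b, true, w)) := by
  simp only [attA, hτ]
  rw [if_neg (inr_ne_eo _ _), if_neg (by rintro ⟨-, -, hc⟩; exact inr_ne_eo _ _ hc)]
  simp [hok, hq]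

theorem attA_F_dead (hτ : Q.alice x none = some p₁) {w : Fin m}
    (hsp : M.spare = none) :
    attA M Q x (some (Sum.inr (true, false, w))) = some (Sum.inr (true, false, w)) := by
  simp only [attA, hτ]
  rw [if_neg (inr_ne_eo _ _), if_neg (by rintro ⟨-, -, hc⟩; exact inr_ne_eo _ _ hc)]
  simp [hsp]

theorem attA_G_port (hτ : Q.alice x none = some p₁) {c : Bool} {w : Fin m}
    (hq : Q.alice x (some w) = none) :
    attA M Q x (some (Sum.inr (c, true, w))) = some (Sum.inr (c, true, w)) := by
  simp only [attA, hτ]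
  rw [if_neg (inr_ne_eo _ _), if_neg (by rintro ⟨-, -, hc⟩; exact inr_ne_eo _ _ hc)]
  simp [hq]

theorem attA_G_int (hτ : Q.alice x none = some p₁) {c : Bool} {w q : Fin m}
    (hq : Q.alice x (some w) = some q) (hqw : q ≠ w) :
    attA M Q x (some (Sum.inr (c, true, w))) = some (Sum.inr (c, true, q)) := by
  simp only [attA, hτ]
  rw [if_neg (inr_ne_eo _ _), if_neg (by rintro ⟨-, -, hc⟩; exact inr_ne_eo _ _ hc)]
  simp [hq, hqw]

theorem attA_G_cross (hτ : Q.alice x none = some p₁) {c : Bool} {w : Fin m}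
    (hq : Q.alice x (some w) = some w) (hok : ¬(M.spare = none ∧ c = true)) :
    attA M Q x (some (Sum.inr (c, true, w))) = some (Sum.inr (c, false, w)) := by
  simp only [attA, hτ]
  rw [if_neg (inr_ne_eo _ _), if_neg (by rintro ⟨-, -, hc⟩; exact inr_ne_eo _ _ hc)]
  simp [hq, hok]

theorem attA_G_dead (hτ : Q.alice x none = some p₁) {w : Fin m}
    (hq : Q.alice x (some w) = some w) (hsp : M.spare = none) :
    attA M Q x (some (Sum.inr (true, true, w))) = some (Sum.inr (true, true, w)) := by
  simp only [attA, hτ]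
  rw [if_neg (inr_ne_eo _ _), if_neg (by rintro ⟨-, -, hc⟩; exact inr_ne_eo _ _ hc)]
  simp [hq, hsp]


/-! #### Bob-side computation lemmas -/

variable {y : Y}

theorem attB_old (p : ι) : attB M Q y (Sum.inl p) = Sum.inl (M.b y p) := by
  simp [attB]

theorem attB_F_move {b : Bool} {w : Fin m} (hok : ¬(M.spare = none ∧ b = true))
    (hw : Q.bob y w ≠ w) :
    attB M Q y (Sum.inr (b, false, w)) = Sum.inr (b, false, Q.bob y w) := by
  simp [attB, hok, hw]

theorem attB_F_cross {b : Bool} {w : Fin m} (hok : ¬(M.spare = none ∧ b = true))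
    (hw : Q.bob y w = w) :
    attB M Q y (Sum.inr (b, false, w)) = Sum.inr (!b, true, w) := by
  simp [attB, hok, hw]

theorem attB_F_dead {w : Fin m} (hsp : M.spare = none) :
    attB M Q y (Sum.inr (true, false, w)) = Sum.inr (true, false, w) := by
  simp [attB, hsp]

theorem attB_G_move {c : Bool} {w : Fin m} (hw : Q.bob y w ≠ w) :
    attB M Q y (Sum.inr (c, true, w)) = Sum.inr (c, true, Q.bob y w) := by
  simp [attB, hw]

theorem attB_G_cross {c : Bool} {w : Fin m} (hw : Q.bob y w = w)
    (hok : ¬(M.spare = none ∧ c = false)) :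
    attB M Q y (Sum.inr (c, true, w)) = Sum.inr (!c, false, w) := by
  simp [attB, hw, hok]

theorem attB_G_dead {w : Fin m} (hw : Q.bob y w = w) (hsp : M.spare = none) :
    attB M Q y (Sum.inr (false, true, w)) = Sum.inr (false, true, w) := by
  simp [attB, hw, hsp]

/-! #### Involutivity -/

theorem attB_inv (y : Y) : Function.Involutive (attB M Q y) := by
  intro P
  rcases P with p | ⟨b, bg, w⟩
  · simp [attB, M.binv y p]
  · have hbb := Q.bob_inv y w
    have hbnw : Q.bob y (Q.bob y w) = w := hbb
    cases bg <;> cases b <;> by_cases hsp : M.spare = none <;>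
      by_cases hw : Q.bob y w = w <;>
      simp [attB, hsp, hw, hbnw, eq_comm (a := w) (b := Q.bob y w)]



theorem attA_inv (x : X) : Function.Involutive (attA M Q x) := by
  intro e
  rcases hτ : Q.alice x none with _ | p₁
  · -- dead case
    rcases e with _ | ⟨p | v⟩
    · show attA M Q x (attA M Q x (eo none)) = eo none
      rw [attA_dead M Q hτ, attA_dead M Q hτ, M.ainv]
    · show attA M Q x (attA M Q x (eo (some p))) = eo (some p)
      rw [attA_dead M Q hτ, attA_dead M Q hτ, M.ainv]
    · rw [attA_dead_inr M Q hτ, attA_dead_inr M Q hτ]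
  · -- live case
    have hback := Q.alice_inv x none
    rw [hτ] at hback
    by_cases h1 : e = eo (M.out x false)
    · rw [h1, attA_out0 M Q hτ, attA_F_entry M Q hτ (by simp)]
      simp
    · by_cases h2 : M.spare ≠ none ∧ M.out x true ≠ M.out x false ∧ e = eo (M.out x true)
      · obtain ⟨hsp, hne, he⟩ := h2
        rw [he, attA_out1 M Q hτ hsp hne, attA_F_entry M Q hτ (by simp [hsp])]
        simp [hne]
      · rcases e with _ | ⟨p | ⟨b, bg, w⟩⟩
        · -- the tap
          rw [show (none : Option (Cend ι m)) = (eo none : Option (Cend ι m)) from rfl] at h1 h2 ⊢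
          rw [attA_old_exc M Q hτ h1 h2]
          have h1' : (eo (M.a x none) : Option (Cend ι m)) ≠ eo (M.out x false) := by
            intro hc
            have := congrArg (M.a x) (eo_inj hc)
            rw [M.ainv, M.out_fixed] at this
            exact h1 (by rw [this])
          have h2' : ¬(M.spare ≠ none ∧ M.out x true ≠ M.out x false ∧
              (eo (M.a x none) : Option (Cend ι m)) = eo (M.out x true)) := by
            rintro ⟨ha', hb', hc⟩
            have := congrArg (M.a x) (eo_inj hc)
            rw [M.ainv, M.out_fixed] at this
            exact h2 ⟨ha', hb', by rw [this]⟩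
          rw [attA_old_exc M Q hτ h1' h2', M.ainv]
        · -- an old pipe end
          rw [show (some (Sum.inl p) : Option (Cend ι m)) = (eo (some p) : Option (Cend ι m))
            from rfl] at h1 h2 ⊢
          rw [attA_old_exc M Q hτ h1 h2]
          have h1' : (eo (M.a x (some p)) : Option (Cend ι m)) ≠ eo (M.out x false) := by
            intro hc
            have := congrArg (M.a x) (eo_inj hc)
            rw [M.ainv, M.out_fixed] at this
            exact h1 (by rw [this])
          have h2' : ¬(M.spare ≠ none ∧ M.out x true ≠ M.out x false ∧
              (eo (M.a x (some p)) : Option (Cend ι m)) = eo (M.out x true)) := by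
            rintro ⟨ha', hb', hc⟩
            have := congrArg (M.a x) (eo_inj hc)
            rw [M.ainv, M.out_fixed] at this
            exact h2 ⟨ha', hb', by rw [this]⟩
          rw [attA_old_exc M Q hτ h1' h2', M.ainv]
        · cases bg
          · -- a forward copy
            by_cases hd : M.spare = none ∧ b = true
            · obtain ⟨hsp, hb⟩ := hd
              subst hb
              rw [attA_F_dead M Q hτ hsp, attA_F_dead M Q hτ hsp]
            · rcases hq : Q.alice x (some w) with _ | q
              · -- the entry end of the forward copy
                have hw : w = p₁ := by
                  have h3 := Q.alice_inv x (some w)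
                  rw [hq, hτ] at h3
                  exact (Option.some_inj.mp h3).symm
                subst hw
                rw [attA_F_entry M Q hτ hd]
                cases b
                · rw [if_neg (by simp)]
                  rw [attA_out0 M Q hτ]
                · rw [if_pos rfl]
                  have hsp : M.spare ≠ none := fun hc => hd ⟨hc, rfl⟩
                  by_cases hne : M.out x true ≠ M.out x false
                  · rw [if_pos hne, attA_out1 M Q hτ hsp hne]
                  · rw [if_neg hne, attA_F_entry M Q hτ hd, if_pos rfl, if_neg hne]
              · by_cases hqw : q = w
                · subst hqw
                  rw [attA_F_cross M Q hτ hd hq, attA_G_cross M Q hτ hq hd]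
                · have hq' : Q.alice x (some q) = some w := by
                    have h3 := Q.alice_inv x (some w)
                    rw [hq] at h3
                    exact h3
                  rw [attA_F_int M Q hτ hd hq hqw,
                    attA_F_int M Q hτ hd hq' (fun hc => hqw hc.symm)]
          · -- a reverse copy
            rcases hq : Q.alice x (some w) with _ | q
            · rw [attA_G_port M Q hτ hq, attA_G_port M Q hτ hq]
            · by_cases hqw : q = w
              · subst hqw
                by_cases hd : M.spare = none ∧ b = true
                · obtain ⟨hsp, hb⟩ := hd
                  subst hb
                  rw [attA_G_dead M Q hτ hq hsp, attA_G_dead M Q hτ hq hsp]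
                · rw [attA_G_cross M Q hτ hq hd, attA_F_cross M Q hτ hd hq]
              · have hq' : Q.alice x (some q) = some w := by
                  have h3 := Q.alice_inv x (some w)
                  rw [hq] at h3
                  exact h3
                rw [attA_G_int M Q hτ hq hqw,
                  attA_G_int M Q hτ hq' (fun hc => hqw hc.symm)]


/-! #### Embedding steps into the extended machine -/

theorem emb_old_dead {x : X} {y : Y} (hτ : Q.alice x none = none) {e e' : Option ι}
    (h : Step (M.a x) (M.b y) e e') : Step (attA M Q x) (attB M Q y) (eo e) (eo e') := by
  obtain ⟨p, hp, hpne, hbp, rfl⟩ := h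
  refine ⟨Sum.inl p, ?_, ?_, ?_, ?_⟩
  · rw [attA_dead M Q hτ, hp]; rfl
  · rw [attA_dead M Q hτ]; exact fun hc => hpne (eo_inj hc)
  · rw [attB_old]; exact fun hc => hbp (Sum.inl_injective hc)
  · rw [attB_old]; rfl

theorem emb_old_live {x : X} {y : Y} (hτ : Q.alice x none = some p₁) {e e' : Option ι}
    (h : Step (M.a x) (M.b y) e e') : Step (attA M Q x) (attB M Q y) (eo e) (eo e') := by
  obtain ⟨p, hp, hpne, hbp, rfl⟩ := h
  refine ⟨Sum.inl p, ?_, ?_, ?_, ?_⟩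
  · rw [attA_old M Q hτ hpne, hp]; rfl
  · rw [attA_old M Q hτ hpne]; exact fun hc => hpne (eo_inj hc)
  · rw [attB_old]; exact fun hc => hbp (Sum.inl_injective hc)
  · rw [attB_old]; rfl

/-- The embedding of a forward copy, mapping the tap to the corresponding entry port. -/
def embF (x : X) (b₀ : Bool) : Option (Fin m) → Option (Cend ι m) := fun u =>
  match u with
  | none => eo (M.out x b₀)
  | some w => some (Sum.inr (b₀, false, w))

/-- The embedding of a reverse copy. -/
def embG (c : Bool) : Option (Fin m) → Option (Cend ι m) := fun u =>
  match u with
  | none => none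
  | some w => some (Sum.inr (c, true, w))

theorem embF_entry {x : X} {b₀ : Bool} (hτ : Q.alice x none = some p₁)
    (halive : b₀ = true → (M.spare ≠ none ∧ M.out x true ≠ M.out x false)) :
    attA M Q x (eo (M.out x b₀)) = some (Sum.inr (b₀, false, p₁)) := by
  cases b₀ with
  | false => exact attA_out0 M Q hτ
  | true => exact attA_out1 M Q hτ (halive rfl).1 (halive rfl).2

theorem embF_step {x : X} {y : Y} {b₀ : Bool} (hτ : Q.alice x none = some p₁)
    (halive : b₀ = true → (M.spare ≠ none ∧ M.out x true ≠ M.out x false))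
    {u u' : Option (Fin m)} (h : Step (Q.alice x) (Q.bob y) u u') :
    Step (attA M Q x) (attB M Q y) (embF M x b₀ u) (embF M x b₀ u') := by
  have hok : ¬(M.spare = none ∧ b₀ = true) := by
    rintro ⟨hsp, hbt⟩
    exact (halive hbt).1 hsp
  obtain ⟨q, hq, hne, hbq, rfl⟩ := h
  cases u with
  | none =>
    have hqp : q = p₁ := by rw [hτ] at hq; exact (Option.some_inj.mp hq).symm
    subst hqp
    simp only [embF]
    refine ⟨Sum.inr (b₀, false, q), ?_, ?_, ?_, ?_⟩
    · exact embF_entry M Q hτ halive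
    · rw [embF_entry M Q hτ halive]
      exact inr_ne_eo _ _
    · rw [attB_F_move M Q hok hbq]
      simp [hbq]
    · rw [attB_F_move M Q hok hbq]
  | some w =>
    have hqw : q ≠ w := fun hc => hne (by rw [hq, hc])
    simp only [embF]
    refine ⟨Sum.inr (b₀, false, q), ?_, ?_, ?_, ?_⟩
    · exact attA_F_int M Q hτ hok hq hqw
    · rw [attA_F_int M Q hτ hok hq hqw]
      simp [hqw]
    · rw [attB_F_move M Q hok hbq]
      simp [hbq]
    · rw [attB_F_move M Q hok hbq]

theorem embG_rtg {x : X} {y : Y} {c : Bool} (hτ : Q.alice x none = some p₁)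
    {u v : Option (Fin m)} (h : Relation.ReflTransGen (Step (Q.alice x) (Q.bob y)) u v)
    (hu : u ≠ none) :
    Relation.ReflTransGen (Step (attA M Q x) (attB M Q y)) (embG c u) (embG c v) := by
  induction h using Relation.ReflTransGen.head_induction_on with
  | refl => exact Relation.ReflTransGen.refl
  | head h' hrest ih =>
    rename_i s t
    obtain ⟨q, hq, hne, hbq, ht⟩ := h'
    obtain ⟨w, rfl⟩ : ∃ w, s = some w := by
      cases s with
      | none => exact absurd rfl hu
      | some w => exact ⟨w, rfl⟩
    have hqw : q ≠ w := fun hc => hne (by rw [hq, hc])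
    obtain ⟨w', rfl⟩ : ∃ w', t = some w' := ⟨Q.bob y q, ht⟩
    have hstep : Step (attA M Q x) (attB M Q y) (embG c (some w)) (embG c (some w')) := by
      simp only [embG]
      refine ⟨Sum.inr (c, true, q), ?_, ?_, ?_, ?_⟩
      · exact attA_G_int M Q hτ hq hqw
      · rw [attA_G_int M Q hτ hq hqw]
        simp [hqw]
      · rw [attB_G_move M Q hbq]
        simp [hbq]
      · rw [attB_G_move M Q hbq]
        rw [Option.some_inj.mp ht]
    have ht' : (some w' : Option (Fin m)) ≠ none := by simp
    exact Relation.ReflTransGen.head hstep (ih ht')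


theorem dead_false {x : X} {f : X → Y → Bool} (hQ : Q.Computes f)
    (hτ : Q.alice x none = none) (y : Y) : f x y = false := by
  have h := hQ x y
  have h2 : Q.spill x y = Sum.inl none := walk_fix hτ _
  rw [h2] at h
  exact h.symm

/-- The extended machine computes the XOR. -/
noncomputable def PM.attach (M : PM X Y ι g) (Q : Protocol X Y m) {f : X → Y → Bool}
    (hQ : Q.Computes f) : PM X Y (Cend ι m) (fun x y => xor (g x y) (f x y)) where
  a := attA M Q
  b := attB M Q
  ainv := attA_inv M Q
  binv := attB_inv M Q
  out := attOut M Q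
  spare := attSpare M
  out_fixed := by
    intro x c
    rcases hτ : Q.alice x none with _ | p₁
    · have h1 : attOut M Q x c = eo (M.out x c) := by simp [attOut, hτ]
      rw [h1, attA_dead M Q hτ, M.out_fixed]
    · have hback := Q.alice_inv x none
      rw [hτ] at hback
      have h1 : attOut M Q x c = some (Sum.inr (c, true, p₁)) := by simp [attOut, hτ]
      rw [h1, attA_G_port M Q hτ hback]
  out_ne := by
    intro x y hg
    rcases hτ : Q.alice x none with _ | p₁
    · have hf : f x y = false := dead_false Q hQ hτ y
      rw [hf, Bool.xor_false] at hg
      have h1 : attOut M Q x false = eo (M.out x false) := by simp [attOut, hτ]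
      have h2 : attOut M Q x true = eo (M.out x true) := by simp [attOut, hτ]
      rw [h1, h2]
      exact fun hc => M.out_ne x y hg (eo_inj hc)
    · have h1 : attOut M Q x false = some (Sum.inr (false, true, p₁)) := by simp [attOut, hτ]
      have h2 : attOut M Q x true = some (Sum.inr (true, true, p₁)) := by simp [attOut, hτ]
      rw [h1, h2]
      simp
  spare_a := by
    intro x s hs
    rcases hsp : M.spare with _ | s'
    · simp only [attSpare, hsp] at hs
      by_cases hm : 0 < m
      · rw [dif_pos hm] at hs
        have hsv := Option.some_inj.mp hs
        rcases hτ : Q.alice x none with _ | p₁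
        · rw [← hsv, attA_dead_inr M Q hτ]
        · rw [← hsv, attA_F_dead M Q hτ hsp]
      · rw [dif_neg hm] at hs
        cases hs
    · simp only [attSpare, hsp] at hs
      have hsv := Option.some_inj.mp hs
      rcases hτ : Q.alice x none with _ | p₁
      · rw [← hsv]
        show attA M Q x (eo (some s')) = eo (some s')
        rw [attA_dead M Q hτ, M.spare_a x s' hsp]
      · rw [← hsv]
        show attA M Q x (eo (some s')) = eo (some s')
        rw [attA_old_exc M Q hτ ?_ ?_, M.spare_a x s' hsp]
        · intro hc
          exact M.spare_out x false s' hsp (eo_inj hc).symm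
        · rintro ⟨-, -, hc⟩
          exact M.spare_out x true s' hsp (eo_inj hc).symm
  spare_b := by
    intro y s hs
    rcases hsp : M.spare with _ | s'
    · simp only [attSpare, hsp] at hs
      by_cases hm : 0 < m
      · rw [dif_pos hm] at hs
        have hsv := Option.some_inj.mp hs
        rw [← hsv, attB_F_dead M Q hsp]
      · rw [dif_neg hm] at hs
        cases hs
    · simp only [attSpare, hsp] at hs
      have hsv := Option.some_inj.mp hs
      rw [← hsv, attB_old, M.spare_b y s' hsp]
  spare_out := by
    intro x c s hs
    rcases hsp : M.spare with _ | s'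
    · simp only [attSpare, hsp] at hs
      by_cases hm : 0 < m
      · rw [dif_pos hm] at hs
        have hsv := Option.some_inj.mp hs
        rcases hτ : Q.alice x none with _ | p₁
        · intro hc
          rw [show attOut M Q x c = eo (M.out x c) by simp [attOut, hτ], ← hsv] at hc
          exact eo_ne_inr _ _ hc
        · intro hc
          rw [show attOut M Q x c = some (Sum.inr (c, true, p₁)) by simp [attOut, hτ],
            ← hsv] at hc
          simp at hc
      · rw [dif_neg hm] at hs
        cases hs
    · simp only [attSpare, hsp] at hs
      have hsv := Option.some_inj.mp hs
      rcases hτ : Q.alice x none with _ | p₁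
      · intro hc
        rw [show attOut M Q x c = eo (M.out x c) by simp [attOut, hτ], ← hsv] at hc
        exact M.spare_out x c s' hsp (eo_inj hc)
      · intro hc
        rw [show attOut M Q x c = some (Sum.inr (c, true, p₁)) by simp [attOut, hτ],
          ← hsv] at hc
        cases hc
  g_spare := by
    intro x y hg
    rcases hgx : g x y with _ | _
    · rw [hgx, Bool.false_xor] at hg
      rcases hτ : Q.alice x none with _ | p₁
      · exact absurd (dead_false Q hQ hτ y) (by rw [hg]; simp)
      · have hm : 0 < m := p₁.pos
        rcases hsp : M.spare with _ | s'
        · simp [attSpare, hsp, hm]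
        · simp [attSpare, hsp]
    · obtain ⟨s, hsp⟩ := Option.isSome_iff_exists.mp (M.g_spare x y hgx)
      simp [attSpare, hsp]
  reach := by
    intro x y
    rcases hτ : Q.alice x none with _ | p₁
    · -- the new protocol does nothing for this `x`
      have hf : f x y = false := dead_false Q hQ hτ y
      have hx : xor (g x y) (f x y) = g x y := by rw [hf, Bool.xor_false]
      rw [hx, show attOut M Q x (g x y) = eo (M.out x (g x y)) by simp [attOut, hτ]]
      have := Relation.ReflTransGen.lift eo
        (fun u v h => emb_old_dead M Q hτ (y := y) h) _ _ (M.reach x y)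
      simpa [Function.onFun] using this
    · have hback := Q.alice_inv x none
      rw [hτ] at hback
      obtain ⟨E, hrtg, hterm⟩ := digest Q hQ x y
      have halive : g x y = true → (M.spare ≠ none ∧ M.out x true ≠ M.out x false) := by
        intro h
        refine ⟨?_, fun hc => (M.out_ne x y h) hc.symm⟩
        have := M.g_spare x y h
        exact Option.isSome_iff_ne_none.mp this
      have hok : ¬(M.spare = none ∧ g x y = true) := by
        rintro ⟨hsp, hbt⟩
        exact (halive hbt).1 hsp
      have hROld : Relation.ReflTransGen (Step (attA M Q x) (attB M Q y)) none
          (eo (M.out x (g x y))) := by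
        have := Relation.ReflTransGen.lift eo
          (fun u v h => emb_old_live M Q hτ (y := y) h) _ _ (M.reach x y)
        simpa [Function.onFun] using this
      rcases hterm with ⟨hf, hfix⟩ | ⟨hf, p, hap, hane, hbp⟩
      · -- `f x y = false`: exit with the same parity
        have hxor : xor (g x y) (f x y) = g x y := by rw [hf, Bool.xor_false]
        rw [hxor, show attOut M Q x (g x y) = some (Sum.inr (g x y, true, p₁))
          by simp [attOut, hτ]]
        have hEne : E ≠ none := by
          rintro rfl
          rw [hτ] at hfix
          cases hfix
        obtain ⟨s, rfl⟩ : ∃ s, E = some s := Option.ne_none_iff_exists'.mp hEne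
        rcases hrtg.cases_tail with heq | ⟨u, hpre, hlast⟩
        · cases heq
        · obtain ⟨pt, hup, hune, hubp, hE⟩ := hlast
          have hs : s = Q.bob y pt := Option.some_inj.mp hE
          have hbs : Q.bob y s ≠ s := by
            rw [hs, Q.bob_inv y pt]
            exact fun hc => hubp hc.symm
          have hbsv : Q.bob y s = pt := by rw [hs, Q.bob_inv y pt]
          have hF : Relation.ReflTransGen (Step (attA M Q x) (attB M Q y))
              (eo (M.out x (g x y))) (some (Sum.inr (g x y, false, s))) := by
            have := Relation.ReflTransGen.lift (embF M x (g x y))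
              (fun u v h => embF_step M Q hτ halive h) _ _ hrtg
            simpa [embF, Function.onFun] using this
          have hstep1 : Step (attA M Q x) (attB M Q y)
              (some (Sum.inr (g x y, false, s))) (some (Sum.inr (g x y, true, pt))) := by
            refine ⟨Sum.inr (g x y, true, s), ?_, ?_, ?_, ?_⟩
            · exact attA_F_cross M Q hτ hok hfix
            · rw [attA_F_cross M Q hτ hok hfix]
              simp
            · rw [attB_G_move M Q hbs]
              simp [hbs]
            · rw [attB_G_move M Q hbs, hbsv]
          have hrev : Relation.ReflTransGen (Step (Q.alice x) (Q.bob y))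
              (Q.alice x u) (some p₁) := by
            have := rtg_rev (Q.alice_inv x) (Q.bob_inv y) hpre
              ⟨some s, pt, hup, hune, hubp, hE⟩
            rwa [hτ] at this
          have hG : Relation.ReflTransGen (Step (attA M Q x) (attB M Q y))
              (some (Sum.inr (g x y, true, pt))) (some (Sum.inr (g x y, true, p₁))) := by
            have := embG_rtg M Q hτ (c := g x y) hrev (by rw [hup]; simp)
            rw [hup] at this
            simpa [embG] using this
          exact ((hROld.trans hF).tail hstep1).trans hG
      · -- `f x y = true`: exit with flipped parity
        have hxor : xor (g x y) (f x y) = !(g x y) := by rw [hf, Bool.xor_true]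
        rw [hxor, show attOut M Q x (!(g x y)) = some (Sum.inr (!(g x y), true, p₁))
          by simp [attOut, hτ]]
        cases E with
        | none =>
          have hpp : p = p₁ := by
            rw [hτ] at hap
            exact (Option.some_inj.mp hap).symm
          subst hpp
          have hstep : Step (attA M Q x) (attB M Q y) (eo (M.out x (g x y)))
              (some (Sum.inr (!(g x y), true, p))) := by
            refine ⟨Sum.inr (g x y, false, p), ?_, ?_, ?_, ?_⟩
            · exact embF_entry M Q hτ halive
            · rw [embF_entry M Q hτ halive]
              exact inr_ne_eo _ _
            · rw [attB_F_cross M Q hok hbp]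
              simp
            · rw [attB_F_cross M Q hok hbp]
          exact hROld.tail hstep
        | some s =>
          rcases hrtg.cases_tail with heq | ⟨u, hpre, hlast⟩
          · cases heq
          · obtain ⟨pt, hup, hune, hubp, hE⟩ := hlast
            have hs : s = Q.bob y pt := Option.some_inj.mp hE
            have hbs : Q.bob y s ≠ s := by
              rw [hs, Q.bob_inv y pt]
              exact fun hc => hubp hc.symm
            have hbsv : Q.bob y s = pt := by rw [hs, Q.bob_inv y pt]
            have hps : p ≠ s := fun hc => hane (by rw [hap, hc])
            have hback' : Q.alice x (some p) = some s := by
              have h3 := Q.alice_inv x (some s)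
              rw [hap] at h3
              exact h3
            have hF : Relation.ReflTransGen (Step (attA M Q x) (attB M Q y))
                (eo (M.out x (g x y))) (some (Sum.inr (g x y, false, s))) := by
              have := Relation.ReflTransGen.lift (embF M x (g x y))
                (fun u v h => embF_step M Q hτ halive h) _ _ hrtg
              simpa [embF, Function.onFun] using this
            have hstep1 : Step (attA M Q x) (attB M Q y)
                (some (Sum.inr (g x y, false, s))) (some (Sum.inr (!(g x y), true, p))) := by
              refine ⟨Sum.inr (g x y, false, p), ?_, ?_, ?_, ?_⟩
              · exact attA_F_int M Q hτ hok hap hps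
              · rw [attA_F_int M Q hτ hok hap hps]
                simp [hps]
              · rw [attB_F_cross M Q hok hbp]
                simp
              · rw [attB_F_cross M Q hok hbp]
            have hstep2 : Step (attA M Q x) (attB M Q y)
                (some (Sum.inr (!(g x y), true, p))) (some (Sum.inr (!(g x y), true, pt))) := by
              refine ⟨Sum.inr (!(g x y), true, s), ?_, ?_, ?_, ?_⟩
              · exact attA_G_int M Q hτ hback' (fun hc => hps hc.symm)
              · rw [attA_G_int M Q hτ hback' (fun hc => hps hc.symm)]
                intro hc
                simp at hc
                exact hps hc.symm
              · rw [attB_G_move M Q hbs]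
                simp [hbs]
              · rw [attB_G_move M Q hbs, hbsv]
            have hrev : Relation.ReflTransGen (Step (Q.alice x) (Q.bob y))
                (Q.alice x u) (some p₁) := by
              have := rtg_rev (Q.alice_inv x) (Q.bob_inv y) hpre
                ⟨some s, pt, hup, hune, hubp, hE⟩
              rwa [hτ] at this
            have hG : Relation.ReflTransGen (Step (attA M Q x) (attB M Q y))
                (some (Sum.inr (!(g x y), true, pt))) (some (Sum.inr (!(g x y), true, p₁))) := by
              have := embG_rtg M Q hτ (c := !(g x y)) hrev (by rw [hup]; simp)
              rw [hup] at this
              simpa [embG] using this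
            exact (((hROld.trans hF).tail hstep1).tail hstep2).trans hG

end Attach


/-! ### Main theorem -/

section Main

variable {X Y : Type*} [Fintype X] [Fintype Y]

theorem main_pm (k : ℕ) (fs : Fin k → X → Y → Bool) :
    ∃ (ι : Type) (_ : Fintype ι)
      (_ : PM X Y ι (fun x y => (List.ofFn fun i => fs i x y).foldr Bool.xor false)),
      Fintype.card ι ≤ 4 * ∑ i, GH (fs i) := by
  induction k with
  | zero =>
    refine ⟨Empty, inferInstance, PM.congr PM.base (fun x y => by simp), ?_⟩
    simp
  | succ k ih =>
    obtain ⟨ι, fι, M, hcard⟩ := ih (fun i => fs i.succ)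
    obtain ⟨Q, hQ⟩ := exists_opt (fs 0)
    refine ⟨Cend ι (GH (fs 0)), inferInstance, (M.attach Q hQ).congr ?_, ?_⟩
    · intro x y
      have h1 : (List.ofFn fun i : Fin (k + 1) => fs i x y) =
          fs 0 x y :: List.ofFn fun i : Fin k => fs i.succ x y := List.ofFn_succ
      rw [h1, List.foldr_cons]
      exact Bool.xor_comm _ _
    · have h2 : Fintype.card (Cend ι (GH (fs 0))) = Fintype.card ι + 4 * GH (fs 0) := by
        simp [Cend]
        ring
      rw [h2, Fin.sum_univ_succ]
      have h3 : ∑ i : Fin k, GH (fs i.succ) = ∑ i : Fin k, GH ((fun i : Fin k => fs i.succ) i) := rfl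
      omega

end Main



/-- Garden-hose parity composition: the garden-hose complexity of the
XOR of Boolean functions satisfies `GH(⊕ᵢ fᵢ) ≤ 4 ∑ᵢ GH(fᵢ)`. -/
theorem gh_xor_le {X Y : Type*} [Fintype X] [Fintype Y] {k : ℕ}
    (fs : Fin k → X → Y → Bool) :
    GH (fun x y => (List.ofFn fun i => fs i x y).foldr Bool.xor false)
      ≤ 4 * ∑ i, GH (fs i) := by
  obtain ⟨ι, fι, M, hcard⟩ := main_pm k fs
  exact le_trans (@PM.gh_le X Y _ _ ι fι _ M) hcard

end GardenHose
end

section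
/- Robustness-of-entanglement lower bound: if a resource state ρ achieves success probability at least 1−γ on the n-fold parallel-repeated δ-relaxed BB84 measurement NLQC, while every separable state achieves success probability at most (2^{h(δ)} β)^n with β = cos²(π/8), then the log-robustness of entanglement satisfies r(ρ) ≥ n·(−log(2^{h(δ)} β)) + log(1−γ). -/
open scoped BigOperators ComplexOrder Matrix Kronecker

noncomputable section

namespace QI

/-- The binary entropy function (base 2). -/
def binEntropy (x : ℝ) : ℝ :=
  -(x * Real.logb 2 x) - (1 - x) * Real.logb 2 (1 - x)

/-- A bipartite state is separable if it is a convex combination of product states. -/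
def Separable {L R : Type*} [Fintype L] [Fintype R]
    (ρ : Matrix (L × R) (L × R) ℂ) : Prop :=
  ∃ (k : ℕ) (p : Fin k → ℝ) (ρL : Fin k → Matrix L L ℂ) (ρR : Fin k → Matrix R R ℂ),
    (∀ i, 0 ≤ p i) ∧ (∑ i, p i = 1) ∧
    (∀ i, (ρL i).PosSemidef) ∧ (∀ i, (ρL i).trace = 1) ∧
    (∀ i, (ρR i).PosSemidef) ∧ (∀ i, (ρR i).trace = 1) ∧
    ρ = ∑ i, (p i : ℂ) • (ρL i ⊗ₖ ρR i)

/-- The robustness of entanglement: the least `s ≥ 0` such that mixing `ρ` with weight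
`1/(1+s)` against some separable state with weight `s/(1+s)` yields a separable
state. -/
def robustness {L R : Type*} [Fintype L] [Fintype R]
    (ρ : Matrix (L × R) (L × R) ℂ) : ℝ :=
  sInf {s : ℝ | 0 ≤ s ∧ ∃ σ : Matrix (L × R) (L × R) ℂ, Separable σ ∧
    Separable (((1 + s : ℝ) : ℂ)⁻¹ • ρ + ((s : ℂ) / ((1 + s : ℝ) : ℂ)) • σ)}

/-- The log-robustness of entanglement `r(ρ) = log₂ (R(ρ) + 1)`. -/
def logRobustness {L R : Type*} [Fintype L] [Fintype R]
    (ρ : Matrix (L × R) (L × R) ℂ) : ℝ :=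
  Real.logb 2 (robustness ρ + 1)

/-! ### Auxiliary material: every state is a real affine combination of product states -/

section Aux

set_option linter.unusedSectionVars false

open Matrix

variable {T : Type*} [Fintype T] [DecidableEq T]

/-- Fourth roots of unity. -/
def phase (k : Fin 4) : ℂ := Complex.I ^ (k : ℕ)

@[simp] lemma phase_zero : phase 0 = 1 := by simp [phase]
@[simp] lemma phase_one : phase 1 = Complex.I := by simp [phase]
@[simp] lemma phase_two : phase 2 = -1 := by
  show Complex.I ^ ((2 : Fin 4) : ℕ) = -1
  rw [show ((2 : Fin 4) : ℕ) = 2 from rfl, Complex.I_sq]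
@[simp] lemma phase_three : phase 3 = -Complex.I := by
  show Complex.I ^ ((3 : Fin 4) : ℕ) = -Complex.I
  rw [show ((3 : Fin 4) : ℕ) = 3 from rfl, pow_succ, Complex.I_sq]
  ring

lemma phase_mul_star (k : Fin 4) : phase k * (starRingEnd ℂ) (phase k) = 1 := by
  rw [phase, map_pow, ← mul_pow]
  simp [Complex.conj_I, Complex.I_mul_I]

lemma std_apply (a b x y : T) (c : ℂ) :
    Matrix.single a b c x y = if x = a then (if y = b then c else 0) else 0 := by
  by_cases hx : x = a <;> by_cases hy : y = b
  · subst hx; subst hy; simp [Matrix.single]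
  · subst hx; simp [Matrix.single, hy, show ¬ b = y from fun hh => hy hh.symm]
  · subst hy; simp [Matrix.single, hx, show ¬ a = x from fun hh => hx hh.symm]
  · simp [Matrix.single, hx, hy, show ¬ a = x from fun hh => hx hh.symm]

def pvec (a b : T) (k : Fin 4) : T → ℂ :=
  fun x => if x = a then 1 else if x = b then phase k else 0

/-- A family of pure states spanning all matrices. -/
def pureish (a b : T) (k : Fin 4) : Matrix T T ℂ :=
  if a = b then Matrix.single a a 1
  else (1/2 : ℂ) • Matrix.vecMulVec (pvec a b k) (star (pvec a b k))

lemma posSemidef_vecMulVec (u : T → ℂ) : (Matrix.vecMulVec u (star u)).PosSemidef := by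
  refine Matrix.posSemidef_iff_dotProduct_mulVec.mpr ⟨?_, fun x => ?_⟩
  · ext i j
    simp [Matrix.conjTranspose_apply, Matrix.vecMulVec_apply, mul_comm]
  · have hstar : star (star x ⬝ᵥ u) = ∑ j, x j * star (u j) := by
      simp [dotProduct, star_mul', star_star]
    have key : star x ⬝ᵥ (Matrix.vecMulVec u (star u)).mulVec x
        = (star x ⬝ᵥ u) * star (star x ⬝ᵥ u) := by
      rw [hstar]
      simp only [dotProduct, Matrix.mulVec, Matrix.vecMulVec_apply, Pi.star_apply]
      rw [Finset.sum_mul_sum]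
      refine Finset.sum_congr rfl fun i _ => ?_
      rw [Finset.mul_sum]
      refine Finset.sum_congr rfl fun j _ => ?_
      ring
    rw [key]
    exact mul_star_self_nonneg _

lemma posSemidef_real_smul {m : Type*} [Fintype m] {M : Matrix m m ℂ} (hM : M.PosSemidef)
    {c : ℝ} (hc : 0 ≤ c) : ((c : ℂ) • M).PosSemidef := by
  refine Matrix.posSemidef_iff_dotProduct_mulVec.mpr ⟨?_, fun x => ?_⟩
  · show ((c : ℂ) • M)ᴴ = (c : ℂ) • M
    rw [Matrix.conjTranspose_smul, hM.1.eq, Complex.star_def, Complex.conj_ofReal]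
  · rw [Matrix.smul_mulVec, dotProduct_smul, smul_eq_mul]
    exact mul_nonneg (by exact_mod_cast hc) (hM.dotProduct_mulVec_nonneg x)

lemma pureish_posSemidef (a b : T) (k : Fin 4) : (pureish a b k).PosSemidef := by
  rw [pureish]
  split_ifs with h
  · have hE : Matrix.single a a (1:ℂ)
        = Matrix.vecMulVec (fun x => if x = a then (1:ℂ) else 0)
            (star (fun x => if x = a then (1:ℂ) else 0)) := by
      ext i j
      rw [std_apply]
      simp only [Matrix.vecMulVec_apply, Pi.star_apply]
      by_cases hi : i = a <;> by_cases hj : j = a <;> simp [hi, hj]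
    rw [hE]
    exact posSemidef_vecMulVec _
  · have h2 : ((1/2 : ℝ) : ℂ) = (1/2 : ℂ) := by norm_num
    rw [← h2]
    exact posSemidef_real_smul (posSemidef_vecMulVec _) (by norm_num)

lemma pureish_trace (a b : T) (k : Fin 4) : (pureish a b k).trace = 1 := by
  rw [pureish]
  split_ifs with h
  · simp [Matrix.trace, Matrix.diag, Matrix.single]
  · rw [Matrix.trace_smul]
    have hf : ∀ x : T, (pvec a b k x) * star (pvec a b k x)
        = (if x = a then 1 else 0) + (if x = b then 1 else 0) := by
      intro x
      rcases eq_or_ne x a with rfl|hxa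
      · simp [pvec, h]
      · rcases eq_or_ne x b with rfl|hxb
        · simp [pvec, hxa, phase_mul_star]
        · simp [pvec, hxa, hxb]
    have ht : (Matrix.vecMulVec (pvec a b k) (star (pvec a b k))).trace = 2 := by
      simp only [Matrix.trace, Matrix.diag, Matrix.vecMulVec_apply, Pi.star_apply, hf]
      rw [Finset.sum_add_distrib]
      simp
      norm_num
    rw [ht]
    norm_num

/-- Coefficients expressing matrix units through `pureish` states. -/
def coefP (a b : T) (k : Fin 4) : ℂ := if a = b then 1/4 else phase k / 2

lemma stdBasis_eq_sum (a b : T) :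
    Matrix.single a b (1:ℂ) = ∑ k : Fin 4, coefP a b k • pureish a b k := by
  rcases eq_or_ne a b with rfl|h
  · have hc : ∀ k : Fin 4, coefP a a k = 1/4 := fun k => by simp [coefP]
    have hp : ∀ k : Fin 4, pureish a a k = Matrix.single a a 1 := fun k => by
      simp [pureish]
    simp only [hc, hp, Fin.sum_univ_four]
    module
  · have hba : b ≠ a := Ne.symm h
    ext x y
    rw [std_apply]
    simp only [pureish, if_neg h, coefP, Matrix.smul_apply, Matrix.sum_apply,
      Matrix.vecMulVec_apply, Pi.star_apply, smul_eq_mul, Fin.sum_univ_four,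
      phase_zero, phase_one, phase_two, phase_three, pvec]
    by_cases hxa : x = a <;> by_cases hxb : x = b <;> by_cases hya : y = a <;>
        by_cases hyb : y = b <;>
      simp_all [Complex.conj_I] <;> (try ring_nf) <;> (try simp [Complex.I_sq]) <;>
      (try ring_nf) <;> (try norm_num)

end Aux

section Kron

set_option linter.unusedSectionVars false

open Matrix

variable {L R : Type*} [Fintype L] [Fintype R] [DecidableEq L] [DecidableEq R]

lemma kron_conjT (A : Matrix L L ℂ) (B : Matrix R R ℂ) : (A ⊗ₖ B)ᴴ = Aᴴ ⊗ₖ Bᴴ := by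
  ext ⟨x, y⟩ ⟨x', y'⟩
  simp [Matrix.conjTranspose_apply, Matrix.kroneckerMap_apply, star_mul']

lemma posSemidef_kron {A : Matrix L L ℂ} {B : Matrix R R ℂ}
    (hA : A.PosSemidef) (hB : B.PosSemidef) : (A ⊗ₖ B).PosSemidef := by
  exact hA.kronecker hB

lemma sum_kron {ι : Type*} (s : Finset ι) (f : ι → Matrix L L ℂ) (B : Matrix R R ℂ) :
    (∑ i ∈ s, f i) ⊗ₖ B = ∑ i ∈ s, f i ⊗ₖ B := by
  ext ⟨x, y⟩ ⟨x', y'⟩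
  simp [Matrix.kroneckerMap_apply, Matrix.sum_apply, Finset.sum_mul]

lemma kron_sum {ι : Type*} (s : Finset ι) (A : Matrix L L ℂ) (g : ι → Matrix R R ℂ) :
    A ⊗ₖ (∑ i ∈ s, g i) = ∑ i ∈ s, A ⊗ₖ g i := by
  ext ⟨x, y⟩ ⟨x', y'⟩
  simp [Matrix.kroneckerMap_apply, Matrix.sum_apply, Finset.mul_sum]

/-- A finite sum of nonnegatively weighted product states is separable. -/
lemma separable_of_sum {J : Type*} [Fintype J] (w : J → ℝ) (hw : ∀ j, 0 ≤ w j)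
    (hs : ∑ j, w j = 1) (A : J → Matrix L L ℂ) (B : J → Matrix R R ℂ)
    (hA : ∀ j, (A j).PosSemidef) (hAt : ∀ j, (A j).trace = 1)
    (hB : ∀ j, (B j).PosSemidef) (hBt : ∀ j, (B j).trace = 1) :
    Separable (∑ j, (w j : ℂ) • (A j ⊗ₖ B j)) := by
  refine ⟨Fintype.card J, w ∘ (Fintype.equivFin J).symm, A ∘ (Fintype.equivFin J).symm,
    B ∘ (Fintype.equivFin J).symm, fun i => hw _, ?_, fun i => hA _, fun i => hAt _,
    fun i => hB _, fun i => hBt _, ?_⟩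
  · exact (Fintype.sum_equiv (Fintype.equivFin J).symm _ _ fun i => rfl).trans hs
  · exact (Fintype.sum_equiv (Fintype.equivFin J).symm _ _ fun i => rfl).symm

/-- A separable state is positive semidefinite with trace one. -/
lemma separable_posSemidef_trace {σ : Matrix (L × R) (L × R) ℂ} (h : Separable σ) :
    σ.PosSemidef ∧ σ.trace = 1 := by
  obtain ⟨k, p, ρL, ρR, hp, hps, hL, hLt, hR, hRt, rfl⟩ := h
  constructor
  · refine Finset.sum_induction _ _ (fun a b ha hb => ha.add hb) Matrix.PosSemidef.zero ?_
    intro i _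
    exact posSemidef_real_smul (posSemidef_kron (hL i) (hR i)) (hp i)
  · rw [Matrix.trace_sum]
    have : ∀ i, ((p i : ℂ) • (ρL i ⊗ₖ ρR i)).trace = (p i : ℂ) := by
      intro i
      rw [Matrix.trace_smul, Matrix.trace_kronecker, hLt i, hRt i]
      simp
    rw [Finset.sum_congr rfl fun i _ => this i]
    exact_mod_cast congrArg (Complex.ofReal) hps

lemma stdBasis_kron (p q : L × R) (v : ℂ) :
    Matrix.single p q v
      = v • (Matrix.single p.1 q.1 (1:ℂ) ⊗ₖ Matrix.single p.2 q.2 (1:ℂ)) := by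
  ext ⟨x, y⟩ ⟨x', y'⟩
  rw [Matrix.smul_apply, Matrix.kroneckerMap_apply, std_apply, std_apply, std_apply]
  by_cases h1 : x = p.1 <;> by_cases h2 : y = p.2 <;> by_cases h3 : x' = q.1 <;>
      by_cases h4 : y' = q.2 <;>
    simp [Prod.ext_iff, h1, h2, h3, h4]

lemma stdBasis_pair (p q : L × R) (v : ℂ) :
    Matrix.single p q v = ∑ k : Fin 4, ∑ l : Fin 4,
      (v * coefP p.1 q.1 k * coefP p.2 q.2 l) • (pureish p.1 q.1 k ⊗ₖ pureish p.2 q.2 l) := by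
  rw [stdBasis_kron, stdBasis_eq_sum p.1 q.1, stdBasis_eq_sum p.2 q.2, sum_kron,
    Finset.smul_sum]
  refine Finset.sum_congr rfl fun k _ => ?_
  rw [kron_sum, Finset.smul_sum]
  refine Finset.sum_congr rfl fun l _ => ?_
  rw [Matrix.smul_kronecker, Matrix.kronecker_smul, smul_smul, smul_smul]

/-- The index type for the affine decomposition into product states. -/
abbrev DecIdx (L R : Type*) : Type _ := (L × R) × (L × R) × Fin 4 × Fin 4

/-- Complex coefficients of the decomposition. -/
def zC (ρ : Matrix (L × R) (L × R) ℂ) (j : DecIdx L R) : ℂ :=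
  ρ j.1 j.2.1 * coefP j.1.1 j.2.1.1 j.2.2.1 * coefP j.1.2 j.2.1.2 j.2.2.2

/-- Left factors of the decomposition. -/
def MA (j : DecIdx L R) : Matrix L L ℂ := pureish j.1.1 j.2.1.1 j.2.2.1

/-- Right factors of the decomposition. -/
def MB (j : DecIdx L R) : Matrix R R ℂ := pureish j.1.2 j.2.1.2 j.2.2.2

lemma decomp (ρ : Matrix (L × R) (L × R) ℂ) :
    ρ = ∑ j : DecIdx L R, zC ρ j • (MA j ⊗ₖ MB j) := by
  have e1 : (∑ j : DecIdx L R, zC ρ j • (MA j ⊗ₖ MB j))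
      = ∑ p : L × R, ∑ q : L × R, ∑ k : Fin 4, ∑ l : Fin 4,
          zC ρ (p, q, k, l) • (MA (p, q, k, l) ⊗ₖ MB (p, q, k, l)) :=
    (Fintype.sum_prod_type _).trans (Finset.sum_congr rfl fun p _ =>
      (Fintype.sum_prod_type _).trans (Finset.sum_congr rfl fun q _ =>
        Fintype.sum_prod_type _))
  rw [e1]
  conv_lhs => rw [Matrix.matrix_eq_sum_single ρ]
  refine Finset.sum_congr rfl fun p _ => Finset.sum_congr rfl fun q _ => ?_
  exact stdBasis_pair p q (ρ p q)

lemma MA_posSemidef (j : DecIdx L R) : (MA j).PosSemidef := pureish_posSemidef _ _ _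

lemma MB_posSemidef (j : DecIdx L R) : (MB j).PosSemidef := pureish_posSemidef _ _ _

lemma MA_trace (j : DecIdx L R) : (MA j).trace = 1 := pureish_trace _ _ _

lemma MB_trace (j : DecIdx L R) : (MB j).trace = 1 := pureish_trace _ _ _

lemma prod_hermitian (j : DecIdx L R) : (MA j ⊗ₖ MB j)ᴴ = MA j ⊗ₖ MB j := by
  rw [kron_conjT, (MA_posSemidef j).1.eq, (MB_posSemidef j).1.eq]

/-- Real-coefficient decomposition of a Hermitian matrix into product states. -/
lemma decomp_re (ρ : Matrix (L × R) (L × R) ℂ) (hρ : ρ.IsHermitian) :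
    ρ = ∑ j : DecIdx L R, (((zC ρ j).re : ℝ) : ℂ) • (MA j ⊗ₖ MB j) := by
  have h1 := decomp ρ
  have h2 : ρ = ∑ j : DecIdx L R, (star (zC ρ j)) • (MA j ⊗ₖ MB j) := by
    conv_lhs => rw [← hρ.eq, h1]
    rw [Matrix.conjTranspose_sum]
    refine Finset.sum_congr rfl fun j _ => ?_
    rw [Matrix.conjTranspose_smul, prod_hermitian]
  calc ρ = (2⁻¹ : ℂ) • ((∑ j : DecIdx L R, zC ρ j • (MA j ⊗ₖ MB j))
        + ∑ j : DecIdx L R, (star (zC ρ j)) • (MA j ⊗ₖ MB j)) := by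
        rw [← h1, ← h2, smul_add, ← add_smul]
        norm_num
    _ = ∑ j : DecIdx L R, (((zC ρ j).re : ℝ) : ℂ) • (MA j ⊗ₖ MB j) := by
        rw [← Finset.sum_add_distrib, Finset.smul_sum]
        refine Finset.sum_congr rfl fun j _ => ?_
        rw [← add_smul, smul_smul]
        congr 1
        rw [Complex.star_def, Complex.add_conj]
        push_cast
        ring

lemma sum_re_eq_one (ρ : Matrix (L × R) (L × R) ℂ) (hρ : ρ.IsHermitian)
    (htr : ρ.trace = 1) : ∑ j : DecIdx L R, (zC ρ j).re = 1 := by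
  have h := decomp_re ρ hρ
  have ht : ρ.trace = ∑ j : DecIdx L R, (((zC ρ j).re : ℝ) : ℂ) := by
    conv_lhs => rw [h]
    rw [Matrix.trace_sum]
    refine Finset.sum_congr rfl fun j _ => ?_
    rw [Matrix.trace_smul, Matrix.trace_kronecker, MA_trace, MB_trace]
    simp
  rw [htr] at ht
  have := ht.symm
  exact_mod_cast this

/-- The defining set of `robustness` is nonempty for any state. -/
lemma robustness_set_nonempty (ρ : Matrix (L × R) (L × R) ℂ) (hρ : ρ.PosSemidef)
    (htr : ρ.trace = 1) :
    ∃ s : ℝ, 0 ≤ s ∧ ∃ σ : Matrix (L × R) (L × R) ℂ, Separable σ ∧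
      Separable (((1 + s : ℝ) : ℂ)⁻¹ • ρ + ((s : ℂ) / ((1 + s : ℝ) : ℂ)) • σ) := by
  haveI : Nonempty (L × R) := by
    rcases isEmpty_or_nonempty (L × R) with h|h
    · exfalso
      rw [Matrix.trace] at htr
      simp [Finset.univ_eq_empty] at htr
    · exact h
  set r : DecIdx L R → ℝ := fun j => (zC ρ j).re with hr
  have hrsum : ∑ j, r j = 1 := sum_re_eq_one ρ hρ.1 htr
  have hmaxid : ∀ x : ℝ, x + max (-x) 0 = max x 0 := by
    intro x
    rcases le_total x 0 with h|h
    · rw [max_eq_left (by linarith : (0:ℝ) ≤ -x), max_eq_right h]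
      ring
    · rw [max_eq_right (by linarith : -x ≤ (0:ℝ)), max_eq_left h]
      ring
  obtain j0 : DecIdx L R := Classical.arbitrary _
  set s : ℝ := 1 + ∑ j, max (-(r j)) 0 with hs
  have hsum_nonneg : 0 ≤ ∑ j, max (-(r j)) 0 :=
    Finset.sum_nonneg fun j _ => le_max_right _ _
  have hs1 : 1 ≤ s := by simp only [hs]; linarith
  have hspos : 0 < s := by linarith
  have h1s : (0:ℝ) < 1 + s := by linarith
  set q : DecIdx L R → ℝ := fun j => (max (-(r j)) 0 + if j = j0 then 1 else 0) / s with hq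
  have hqnn : ∀ j, 0 ≤ q j := by
    intro j
    apply div_nonneg _ hspos.le
    have := le_max_right (-(r j)) 0
    split_ifs <;> linarith
  have hqsum : ∑ j, q j = 1 := by
    rw [hq, ← Finset.sum_div, Finset.sum_add_distrib]
    rw [Finset.sum_ite_eq' Finset.univ j0 (fun _ => (1:ℝ))]
    simp only [Finset.mem_univ, if_pos]
    rw [hs]
    field_simp
    ring
  set σ : Matrix (L × R) (L × R) ℂ := ∑ j, ((q j : ℝ) : ℂ) • (MA j ⊗ₖ MB j) with hσ
  have hσsep : Separable σ :=
    separable_of_sum q hqnn hqsum MA MB (fun j => MA_posSemidef j)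
      (fun j => MA_trace j) (fun j => MB_posSemidef j)
      (fun j => MB_trace j)
  refine ⟨s, by linarith, σ, hσsep, ?_⟩
  set w : DecIdx L R → ℝ := fun j => (max (r j) 0 + if j = j0 then 1 else 0) / (1 + s) with hw
  have hwnn : ∀ j, 0 ≤ w j := by
    intro j
    apply div_nonneg _ h1s.le
    have := le_max_right (r j) 0
    split_ifs <;> linarith
  have hwsum : ∑ j, w j = 1 := by
    rw [hw, ← Finset.sum_div, Finset.sum_add_distrib]
    rw [Finset.sum_ite_eq' Finset.univ j0 (fun _ => (1:ℝ))]
    simp only [Finset.mem_univ, if_pos]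
    have : ∑ j, max (r j) 0 = s := by
      have : ∑ j, max (r j) 0 = ∑ j, (r j + max (-(r j)) 0) :=
        Finset.sum_congr rfl fun j _ => (hmaxid (r j)).symm
      rw [this, Finset.sum_add_distrib, hrsum, hs]
    rw [this]
    field_simp
    ring
  have hmixeq : ((1 + s : ℝ) : ℂ)⁻¹ • ρ + ((s : ℂ) / ((1 + s : ℝ) : ℂ)) • σ
      = ∑ j, ((w j : ℝ) : ℂ) • (MA j ⊗ₖ MB j) := by
    conv_lhs => rw [decomp_re ρ hρ.1, hσ]
    rw [Finset.smul_sum, Finset.smul_sum, ← Finset.sum_add_distrib]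
    refine Finset.sum_congr rfl fun j _ => ?_
    rw [smul_smul, smul_smul, ← add_smul]
    congr 1
    have hsne : (s : ℂ) ≠ 0 := by exact_mod_cast hspos.ne'
    have h1sne : ((1 + s : ℝ) : ℂ) ≠ 0 := by exact_mod_cast h1s.ne'
    show ((1 + s : ℝ) : ℂ)⁻¹ * (((zC ρ j).re : ℝ) : ℂ)
        + (s : ℂ) / ((1 + s : ℝ) : ℂ)
          * (((max (-(r j)) 0 + if j = j0 then 1 else 0) / s : ℝ) : ℂ)
      = (((max (r j) 0 + if j = j0 then 1 else 0) / (1 + s) : ℝ) : ℂ)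
    have hmax : max (r j) 0 = r j + max (-(r j)) 0 := (hmaxid (r j)).symm
    rw [hmax]
    have hrj : r j = (zC ρ j).re := rfl
    rw [hrj]
    push_cast
    field_simp
    ring
  rw [hmixeq]
  exact separable_of_sum w hwnn hwsum MA MB (fun j => MA_posSemidef j)
    (fun j => MA_trace j) (fun j => MB_posSemidef j)
    (fun j => MB_trace j)

end Kron

/-- Robustness-of-entanglement lower bound. -/
theorem log_robustness_lower_bound
    {L R : Type*} [Fintype L] [Fintype R] [DecidableEq L] [DecidableEq R]
    (n : ℕ) (δ γ : ℝ) (hδ0 : 0 ≤ δ) (hδ1 : δ ≤ 1) (hγ0 : 0 ≤ γ) (hγ1 : γ < 1)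
    (psuc : Matrix (L × R) (L × R) ℂ → ℝ)
    (hmix : ∀ ρ σ : Matrix (L × R) (L × R) ℂ,
      ρ.PosSemidef → ρ.trace = 1 → σ.PosSemidef → σ.trace = 1 →
      ∀ t : ℝ, 0 ≤ t → t ≤ 1 →
        t * psuc ρ ≤ psuc ((t : ℂ) • ρ + (((1 - t : ℝ)) : ℂ) • σ))
    (hsep : ∀ σ : Matrix (L × R) (L × R) ℂ, Separable σ →
      psuc σ ≤ ((2 : ℝ) ^ binEntropy δ * Real.cos (Real.pi / 8) ^ 2) ^ n)
    (ρ : Matrix (L × R) (L × R) ℂ) (hρ : ρ.PosSemidef) (htr : ρ.trace = 1)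
    (hwin : 1 - γ ≤ psuc ρ) :
    (n : ℝ) * (-Real.logb 2 ((2 : ℝ) ^ binEntropy δ * Real.cos (Real.pi / 8) ^ 2))
        + Real.logb 2 (1 - γ)
      ≤ logRobustness ρ := by
  set B : ℝ := (2 : ℝ) ^ binEntropy δ * Real.cos (Real.pi / 8) ^ 2 with hB
  have hcos : 0 < Real.cos (Real.pi / 8) := by
    apply Real.cos_pos_of_mem_Ioo
    constructor
    · have := Real.pi_pos
      linarith
    · have := Real.pi_pos
      linarith
  have hBpos : 0 < B := by
    apply mul_pos
    · exact Real.rpow_pos_of_pos (by norm_num) _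
    · positivity
  have hBn : 0 < B ^ n := pow_pos hBpos n
  have h1γ : 0 < 1 - γ := by linarith
  set S : Set ℝ := {s : ℝ | 0 ≤ s ∧ ∃ σ : Matrix (L × R) (L × R) ℂ, Separable σ ∧
    Separable (((1 + s : ℝ) : ℂ)⁻¹ • ρ + ((s : ℂ) / ((1 + s : ℝ) : ℂ)) • σ)} with hS
  have hSne : S.Nonempty := by
    obtain ⟨s, hs0, σ, h1, h2⟩ := robustness_set_nonempty ρ hρ htr
    exact ⟨s, hs0, σ, h1, h2⟩
  have hlb : ∀ s ∈ S, (1 - γ) / B ^ n - 1 ≤ s := by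
    rintro s ⟨hs0, σ, hσ, hmixsep⟩
    obtain ⟨hσps, hσtr⟩ := separable_posSemidef_trace hσ
    have h1s : (0:ℝ) < 1 + s := by linarith
    have ht0 : (0:ℝ) ≤ (1 + s)⁻¹ := by positivity
    have ht1 : (1 + s)⁻¹ ≤ 1 := by
      rw [inv_le_one_iff₀]
      right
      linarith
    have key := hmix ρ σ hρ htr hσps hσtr ((1 + s)⁻¹) ht0 ht1
    have harg : (((1 + s)⁻¹ : ℝ) : ℂ) • ρ + (((1 - (1 + s)⁻¹ : ℝ)) : ℂ) • σ
        = ((1 + s : ℝ) : ℂ)⁻¹ • ρ + ((s : ℂ) / ((1 + s : ℝ) : ℂ)) • σ := by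
      congr 1
      · congr 1
        push_cast
        ring
      · congr 1
        have : (1 : ℝ) - (1 + s)⁻¹ = s / (1 + s) := by
          field_simp
          ring
        rw [this]
        push_cast
        ring
    rw [harg] at key
    have hup := hsep _ hmixsep
    have hchain : (1 + s)⁻¹ * (1 - γ) ≤ B ^ n := by
      calc (1 + s)⁻¹ * (1 - γ) ≤ (1 + s)⁻¹ * psuc ρ :=
            mul_le_mul_of_nonneg_left hwin ht0
        _ ≤ _ := key
        _ ≤ B ^ n := hup
    have h2 : 1 - γ ≤ B ^ n * (1 + s) := by
      have := mul_le_mul_of_nonneg_left hchain h1s.le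
      rw [← mul_assoc, mul_inv_cancel₀ h1s.ne', one_mul] at this
      linarith [this]
    have h3 : (1 - γ) / B ^ n ≤ 1 + s := by
      rw [div_le_iff₀ hBn]
      linarith [h2]
    linarith
  have hRlb : (1 - γ) / B ^ n - 1 ≤ robustness ρ := by
    rw [robustness]
    exact le_csInf hSne hlb
  have hpos : 0 < (1 - γ) / B ^ n := div_pos h1γ hBn
  have hmono : Real.logb 2 ((1 - γ) / B ^ n) ≤ Real.logb 2 (robustness ρ + 1) := by
    exact Real.logb_le_logb_of_le (by norm_num) hpos (by linarith)
  calc (n : ℝ) * (-Real.logb 2 B) + Real.logb 2 (1 - γ)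
      = Real.logb 2 ((1 - γ) / B ^ n) := by
        rw [Real.logb_div h1γ.ne' (pow_ne_zero _ hBpos.ne'), Real.logb_pow]
        ring
    _ ≤ Real.logb 2 (robustness ρ + 1) := hmono
    _ = logRobustness ρ := rfl
end QI
end
end
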